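/- arXiv:1008.5270 — 8 statements merged into one kernel-verified Lean document; each statement's English description precedes it below -/
import Mathlib

section
/- Let p ∈ (0,1) and w₀ ∈ ℂ with w₀ ≠ 0 and |p + 1/p + 1/w₀| ≤ 2. For every complex number A satisfying |A − (p + 1/p + w₀) + (w₀/4)(p + 1/p + 1/w₀)²| ≤ |w₀| (1 − (1/4)|p + 1/p + 1/w₀|²), there exists f ∈ Σ*(p,w₀) with a₂(f) = A. That is, the region of variability of a₂(f) over Σ*(p,w₀) is exactly the closed disc described by this inequality. -/
open Complex Metric Set

/-- The second Taylor coefficient `a₂(f) = f''(0)/2`. -/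
noncomputable def a2 (f : ℂ → ℂ) : ℂ := iteratedDeriv 2 f 0 / 2

/-- `f` belongs to the class `Σ*(p, w₀)` with associated holomorphic function `P`:
`f` is holomorphic on the unit disc except for a simple pole at `p`, `f 0 = 0`,
`f' 0 = 1`, `f` omits `w₀`, and
`P z = -z f'(z)/(f z - w₀) - p/(z - p) + p z/(1 - p z)` extends holomorphically
to the unit disc with `P 0 = 1` and `Re (P z) > 0` there. -/
def SigmaStarWith (p : ℝ) (w₀ : ℂ) (f P : ℂ → ℂ) : Prop :=
  (∃ g : ℂ → ℂ, DifferentiableOn ℂ g (ball (0 : ℂ) 1) ∧ g p ≠ 0 ∧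
      ∀ z ∈ ball (0 : ℂ) 1, z ≠ (p : ℂ) → f z = g z / (z - p)) ∧
  f 0 = 0 ∧ deriv f 0 = 1 ∧
  (∀ z ∈ ball (0 : ℂ) 1, z ≠ (p : ℂ) → f z ≠ w₀) ∧
  DifferentiableOn ℂ P (ball (0 : ℂ) 1) ∧ P 0 = 1 ∧
  (∀ z ∈ ball (0 : ℂ) 1, 0 < (P z).re) ∧
  (∀ z ∈ ball (0 : ℂ) 1, z ≠ (p : ℂ) →
    P z = -z * deriv f z / (f z - w₀) - p / (z - p) + p * z / (1 - p * z))

/-- `f` belongs to the class `Σ*(p, w₀)`. -/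
def SigmaStar (p : ℝ) (w₀ : ℂ) (f : ℂ → ℂ) : Prop :=
  ∃ P : ℂ → ℂ, SigmaStarWith p w₀ f P

/-- `ω` is the Schwarz function associated to `P`, i.e. a holomorphic self-map of
the unit disc fixing `0` with `P = (1 + ω)/(1 - ω)`. -/
def SchwarzOf (P ω : ℂ → ℂ) : Prop :=
  DifferentiableOn ℂ ω (ball (0 : ℂ) 1) ∧
  MapsTo ω (ball (0 : ℂ) 1) (ball (0 : ℂ) 1) ∧ ω 0 = 0 ∧
  ∀ z ∈ ball (0 : ℂ) 1, P z = (1 + ω z) / (1 - ω z)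

lemma one_sub_ne' {w : ℂ} (h : ‖w‖ < 1) : 1 - w ≠ 0 := by
  intro h0
  rw [sub_eq_zero] at h0
  simp [← h0] at h

lemma re_pos_halfplane {w : ℂ} (h : ‖w‖ < 1) : 0 < ((1 + w) / (1 - w)).re := by
  have hne : 1 - w ≠ 0 := one_sub_ne' h
  rw [Complex.div_re]
  have hpos : 0 < Complex.normSq (1 - w) := by
    simpa [Complex.normSq_pos] using hne
  rw [← add_div]
  apply div_pos _ hpos
  have : (1 + w).re * (1 - w).re + (1 + w).im * (1 - w).im = 1 - Complex.normSq w := by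
    simp [Complex.normSq_apply]; ring
  rw [this]
  have : Complex.normSq w < 1 := by
    rw [← Complex.sq_norm]; nlinarith [norm_nonneg w]
  linarith

lemma slit_of_lt {η z : ℂ} (hη : ‖η‖ ≤ 1) (hz : ‖z‖ < 1) :
    1 - η * z ∈ Complex.slitPlane := by
  have : ‖-(η * z)‖ < 1 := by
    rw [norm_neg]
    calc ‖η * z‖ = ‖η‖ * ‖z‖ := by simp [map_mul]
    _ < 1 := by nlinarith [norm_nonneg z, norm_nonneg η]
  simpa [sub_eq_add_neg] using mem_slitPlane_of_norm_lt_one this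

lemma one_sub_mul_ne {η z : ℂ} (hη : ‖η‖ ≤ 1) (hz : ‖z‖ < 1) :
    1 - η * z ≠ 0 :=
  Complex.slitPlane_ne_zero (slit_of_lt hη hz)

lemma cpow_factor_deriv {η e z : ℂ} (hη : ‖η‖ ≤ 1) (hz : ‖z‖ < 1) :
    HasDerivAt (fun z => (1 - η * z) ^ e) (-(e * η) * ((1 - η * z) ^ e / (1 - η * z))) z := by
  have hne : 1 - η * z ≠ 0 := one_sub_mul_ne hη hz
  have hd : HasDerivAt (fun z : ℂ => 1 - η * z) (-η) z := by
    simpa using ((hasDerivAt_id z).const_mul η).const_sub 1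
  have := hd.cpow_const (c := e) (slit_of_lt hη hz)
  convert this using 1
  rw [Complex.cpow_sub _ _ hne, Complex.cpow_one]
  ring

lemma abs_of_mem_ball {z : ℂ} (hz : z ∈ ball (0:ℂ) 1) : ‖z‖ < 1 := by
  simpa using mem_ball_zero_iff.mp hz

lemma alg1 (w P a N L qz z : ℂ) (ha : a ≠ 0) (hN : N ≠ 0) (hw : w ≠ 0) (hP : P ≠ 0) :
    -z * ((w * P * (-qz * a) * N - w * P * a * L) / N ^ 2) / (w * P * a / N) =
      z * qz + z * L / N := by
  rw [div_div_eq_mul_div]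
  field_simp
  ring

private lemma machine (p : ℝ) (hp0 : 0 < p) (hp1 : p < 1) (w₀ : ℂ) (hw : w₀ ≠ 0)
    (q E : ℂ → ℂ) (c₂ : ℂ)
    (hE : ∀ z ∈ ball (0:ℂ) 1, HasDerivAt E (-(q z) * E z) z)
    (hE0 : E 0 = 1) (hEne : ∀ z ∈ ball (0:ℂ) 1, E z ≠ 0)
    (hqd : ∀ z ∈ ball (0:ℂ) 1, DifferentiableAt ℂ q z)
    (hq2 : HasDerivAt q c₂ 0)
    (hq0 : q 0 = (p:ℂ) + 1/p + 1/w₀)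
    (hPre : ∀ z ∈ ball (0:ℂ) 1, 0 < (1 + z * q z).re) :
    SigmaStar p w₀ (fun z => w₀ + w₀ * p * E z / ((z - p) * (1 - p * z))) ∧
    a2 (fun z => w₀ + w₀ * p * E z / ((z - p) * (1 - p * z))) =
      -w₀ * ((((p:ℂ) + 1/p)^2 - 1) - q 0 * ((p:ℂ) + 1/p) + ((q 0)^2 - c₂)/2) := by
  have hpc : (p:ℂ) ≠ 0 := by exact_mod_cast hp0.ne'
  have habsp : ‖(p:ℂ)‖ ≤ 1 := by
    rw [Complex.norm_real, Real.norm_eq_abs, abs_of_pos hp0]; linarith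
  have hpball : (p:ℂ) ∈ ball (0:ℂ) 1 := by
    rw [mem_ball_zero_iff, Complex.norm_real, Real.norm_eq_abs, abs_of_pos hp0]
    exact hp1
  have h0b : (0:ℂ) ∈ ball (0:ℂ) 1 := by simp
  have h0p : (0:ℂ) ≠ (p:ℂ) := fun h => hpc h.symm
  set f : ℂ → ℂ := fun z => w₀ + w₀ * p * E z / ((z - p) * (1 - p * z)) with hf
  have hsub : ∀ z ∈ ball (0:ℂ) 1, (1 - (p:ℂ) * z) ≠ 0 := fun z hz =>
    one_sub_mul_ne habsp (abs_of_mem_ball hz)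
  have hNne : ∀ z ∈ ball (0:ℂ) 1, z ≠ (p:ℂ) → (z - p) * (1 - p * z) ≠ 0 := by
    intro z hz hzp
    exact mul_ne_zero (sub_ne_zero.mpr hzp) (hsub z hz)
  have hNd : ∀ z : ℂ, HasDerivAt (fun z : ℂ => (z - p) * (1 - p * z)) (1 + p^2 - 2*p*z) z := by
    intro z
    have h1 : HasDerivAt (fun z : ℂ => z - (p:ℂ)) 1 z := (hasDerivAt_id z).sub_const _
    have h2 : HasDerivAt (fun z : ℂ => 1 - (p:ℂ) * z) (-(p:ℂ)) z := by
      simpa using ((hasDerivAt_id z).const_mul (p:ℂ)).const_sub 1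
    have := h1.fun_mul h2
    refine this.congr_deriv ?_
    ring
  have hfd : ∀ z ∈ ball (0:ℂ) 1, z ≠ (p:ℂ) → HasDerivAt f
      ((w₀ * p * (-(q z) * E z) * ((z - p) * (1 - p * z)) -
        w₀ * p * E z * (1 + p^2 - 2 * p * z)) / ((z - p) * (1 - p * z))^2) z := by
    intro z hz hzp
    exact (((hE z hz).const_mul (w₀ * p)).div (hNd z) (hNne z hz hzp)).const_add w₀
  constructor
  · refine ⟨fun z => 1 + z * q z, ⟨fun z => w₀ * (z - p) + w₀ * p * E z / (1 - p * z),
      ?_, ?_, ?_⟩, ?_, ?_, ?_, ?_, ?_, ?_, ?_⟩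
    · intro z hz
      apply DifferentiableAt.differentiableWithinAt
      have hEd : DifferentiableAt ℂ E z := (hE z hz).differentiableAt
      have h2 := hsub z hz
      fun_prop (disch := assumption)
    · have h2 : (1 : ℂ) - p * p ≠ 0 := hsub p hpball
      simp only [sub_self, mul_zero, zero_add]
      exact div_ne_zero (mul_ne_zero (mul_ne_zero hw hpc) (hEne p hpball)) h2
    · intro z hz hzp
      have h1 : z - (p:ℂ) ≠ 0 := sub_ne_zero.mpr hzp
      have h2 := hsub z hz
      simp only [hf]
      field_simp
    · -- f 0 = 0
      simp only [hf, hE0]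
      rw [show ((0:ℂ) - ↑p) * (1 - ↑p * 0) = -↑p by ring]
      rw [mul_one, div_neg, mul_div_assoc, div_self hpc, mul_one]
      ring
    · -- deriv f 0 = 1
      rw [(hfd 0 h0b h0p).deriv, hE0, hq0]
      field_simp
      ring
    · -- omits w₀
      intro z hz hzp heq
      simp only [hf] at heq
      exact (div_ne_zero (mul_ne_zero (mul_ne_zero hw hpc) (hEne z hz))
        (hNne z hz hzp)) (by linear_combination heq)
    · intro z hz
      exact ((differentiableAt_id.mul (hqd z hz)).const_add 1).differentiableWithinAt
    · simp
    · simpa using hPre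
    · -- ODE
      intro z hz hzp
      have h1 : z - (p:ℂ) ≠ 0 := sub_ne_zero.mpr hzp
      have h2 := hsub z hz
      have h3 := hEne z hz
      have hNz := hNne z hz hzp
      have h2' : 1 - z*(p:ℂ) ≠ 0 := by rwa [mul_comm]
      have hfw : f z - w₀ = w₀ * ↑p * E z / ((z - ↑p) * (1 - ↑p * z)) := by
        simp only [hf]; ring
      rw [(hfd z hz hzp).deriv, hfw,
        alg1 w₀ (↑p) (E z) ((z - ↑p) * (1 - ↑p * z)) (1 + ↑p^2 - 2*↑p*z) (q z) z h3 hNz hw hpc]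
      field_simp [h1, h2]
      ring
  · -- a2
    have hev : deriv f =ᶠ[nhds (0:ℂ)]
        (fun z => (w₀ * p * (-(q z) * E z) * ((z - p) * (1 - p * z)) -
          w₀ * p * E z * (1 + p^2 - 2 * p * z)) / ((z - p) * (1 - p * z))^2) := by
      have hb : ball (0:ℂ) p ∈ nhds (0:ℂ) := ball_mem_nhds 0 (by exact_mod_cast hp0)
      filter_upwards [hb] with z hz
      have hz1 : z ∈ ball (0:ℂ) 1 := ball_subset_ball (le_of_lt hp1) hz
      have hzp : z ≠ (p:ℂ) := by
        intro h
        rw [mem_ball_zero_iff, h, Complex.norm_real, Real.norm_eq_abs,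
          abs_of_pos hp0] at hz
        exact lt_irrefl _ hz
      exact (hfd z hz1 hzp).deriv
    have hE0d : HasDerivAt E (-(q 0)) 0 := by
      have := hE 0 h0b
      rwa [hE0, mul_one] at this
    have hqE : HasDerivAt (fun z => -(q z) * E z) (-c₂ * E 0 + -(q 0) * -(q 0)) 0 :=
      hq2.neg.mul hE0d
    have hlin : HasDerivAt (fun z : ℂ => 1 + (p:ℂ)^2 - 2*(p:ℂ)*z) (-(2*(p:ℂ)*1)) 0 := by
      have h1 : HasDerivAt (fun z : ℂ => 2*(p:ℂ)*z) (2*(p:ℂ)*1) 0 :=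
        (hasDerivAt_id (0:ℂ)).const_mul (2*(p:ℂ))
      exact h1.const_sub ((1:ℂ) + (p:ℂ)^2)
    have part1 := ((hqE.const_mul (w₀ * p)).mul (hNd 0))
    have part2 := ((hE0d.const_mul (w₀ * p)).mul hlin)
    have hden := (hNd 0).pow 2
    have hNum := part1.sub part2
    have hQ := hNum.div hden (pow_ne_zero 2 (hNne 0 h0b h0p))
    have key : deriv (deriv f) 0 = _ := hev.deriv_eq.trans hQ.deriv
    have h2it : iteratedDeriv 2 f = deriv (deriv f) := by
      rw [show (2:ℕ) = 0+1+1 from rfl, iteratedDeriv_succ, iteratedDeriv_succ,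
        iteratedDeriv_zero]
    show iteratedDeriv 2 f 0 / 2 = _
    rw [h2it, key, hE0, hq0]
    norm_num
    simp only [hE0, hq0]
    field_simp [hw, hpc]
    ring


lemma mobius_lt {b₁ ε z : ℂ} (hb : ‖b₁‖ < 1) (he : ‖ε‖ = 1)
    (hz : ‖z‖ < 1) :
    ‖b₁ + ε * z‖ < ‖1 + (starRingEnd ℂ) b₁ * ε * z‖ := by
  have key : Complex.normSq (1 + (starRingEnd ℂ) b₁ * (ε * z)) -
      Complex.normSq (b₁ + ε * z) = (1 - Complex.normSq b₁) * (1 - Complex.normSq (ε * z)) := by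
    simp only [Complex.normSq_apply, Complex.add_re, Complex.add_im, Complex.mul_re,
      Complex.mul_im, Complex.conj_re, Complex.conj_im, Complex.one_re, Complex.one_im]
    ring
  have h1 : Complex.normSq b₁ < 1 := by
    rw [← Complex.sq_norm]; nlinarith [norm_nonneg b₁]
  have h2 : Complex.normSq (ε * z) < 1 := by
    rw [← Complex.sq_norm, norm_mul, he]; nlinarith [norm_nonneg z]
  have hlt : Complex.normSq (b₁ + ε * z) < Complex.normSq (1 + (starRingEnd ℂ) b₁ * ε * z) := by
    rw [show (starRingEnd ℂ) b₁ * ε * z = (starRingEnd ℂ) b₁ * (ε * z) by ring]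
    nlinarith
  rw [← Complex.sq_norm, ← Complex.sq_norm] at hlt
  exact lt_of_pow_lt_pow_left₀ 2 (norm_nonneg _) hlt

lemma roots_exist {b₁ ε : ℂ} (hb : ‖b₁‖ < 1) (he : ‖ε‖ = 1) :
    ∃ ζ₁ ζ₂ : ℂ, ζ₁ + ζ₂ = b₁ - (starRingEnd ℂ) b₁ * ε ∧ ζ₁ * ζ₂ = -ε ∧ ζ₁ ≠ ζ₂ ∧
      ‖ζ₁‖ ≤ 1 ∧ ‖ζ₂‖ ≤ 1 := by
  obtain ⟨δ, hδ⟩ := IsAlgClosed.exists_pow_nat_eq ((b₁ - (starRingEnd ℂ) b₁ * ε)^2 + 4*ε)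
    zero_lt_two
  set B : ℂ := b₁ - (starRingEnd ℂ) b₁ * ε with hB
  have habs : ∀ ζ₁ ζ₂ : ℂ, ζ₁ + ζ₂ = B → ζ₁ * ζ₂ = -ε → ‖ζ₁‖ ≤ 1 := by
    intro ζ₁ ζ₂ hsum hprod
    by_contra hgt
    push_neg at hgt
    have hζ0 : ζ₁ ≠ 0 := by
      intro h; rw [h] at hgt; simp at hgt; linarith
    set z := ζ₁⁻¹ with hz
    have hzlt : ‖z‖ < 1 := by
      rw [hz, norm_inv]
      exact inv_lt_one_of_one_lt₀ hgt
    have hz1 : 1 - ζ₁*z = 0 := by rw [hz]; field_simp; ring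
    have hfac : 1 + (starRingEnd ℂ) b₁*ε*z - z*(b₁+ε*z) = (1 - ζ₁*z)*(1 - ζ₂*z) := by
      rw [hB] at hsum
      linear_combination z*hsum - z^2*hprod
    rw [hz1, zero_mul] at hfac
    have heq : 1 + (starRingEnd ℂ) b₁*ε*z = z*(b₁+ε*z) := by linear_combination hfac
    have h7 : ‖1 + (starRingEnd ℂ) b₁*ε*z‖ =
        ‖z‖ * ‖b₁+ε*z‖ := by rw [heq, norm_mul]
    have h8 := mobius_lt hb he hzlt
    nlinarith [norm_nonneg (b₁ + ε*z), norm_nonneg z]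
  refine ⟨(B + δ)/2, (B - δ)/2, by ring, by linear_combination (-(1:ℂ)/4) * hδ, ?_,
    habs _ ((B - δ)/2) (by ring) (by linear_combination (-(1:ℂ)/4) * hδ),
    habs _ ((B + δ)/2) (by ring) (by linear_combination (-(1:ℂ)/4) * hδ)⟩
  -- distinct
  intro h
  have hδ0 : δ = 0 := by linear_combination h
  rw [hδ0] at hδ
  obtain ⟨ζ, hζ⟩ : ∃ ζ:ℂ, ζ = B/2 := ⟨_, rfl⟩
  have hζ2 : ζ^2 = -ε := by
    rw [hζ, hB]
    rw [hB] at hδ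
    linear_combination (-(1:ℂ)/4) * hδ
  have habsζ : ‖ζ‖ = 1 := by
    have h1 : (‖ζ‖)^2 = 1 := by
      rw [← norm_pow, hζ2, norm_neg, he]
    have h2 : (‖ζ‖ - 1) * (‖ζ‖ + 1) = 0 := by nlinarith
    rcases mul_eq_zero.mp h2 with h3 | h3
    · linarith
    · nlinarith [norm_nonneg ζ]
  have hzz : ζ * (starRingEnd ℂ) ζ = 1 := by
    rw [Complex.mul_conj, Complex.normSq_eq_norm_sq, habsζ]
    norm_num
  have h3 : 2*ζ = b₁ + (starRingEnd ℂ) b₁ * ζ^2 := by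
    rw [hζ2, hζ, hB]; ring
  have h4 : (2:ℂ) = b₁ * (starRingEnd ℂ) ζ + (starRingEnd ℂ) b₁ * ζ := by
    linear_combination ((starRingEnd ℂ) ζ) * h3 + ((starRingEnd ℂ) b₁ * ζ - 2) * hzz
  have h5 := congrArg Complex.re h4
  have h6 : (b₁ * (starRingEnd ℂ) ζ).re = ((starRingEnd ℂ) b₁ * ζ).re := by
    rw [show b₁ * (starRingEnd ℂ) ζ = (starRingEnd ℂ) ((starRingEnd ℂ) b₁ * ζ) by
      rw [map_mul]; simp]
    exact Complex.conj_re _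
  rw [Complex.add_re, h6] at h5
  have h7 : ((starRingEnd ℂ) b₁ * ζ).re ≤ ‖b₁‖ := by
    refine le_trans (Complex.re_le_norm _) ?_
    rw [norm_mul, Complex.norm_conj, habsζ, mul_one]
  norm_num at h5
  simp only [Complex.mul_re, Complex.conj_re, Complex.conj_im, neg_mul, sub_neg_eq_add] at h7
  linarith

set_option maxHeartbeats 1000000 in
lemma construct (b₁ b₂ : ℂ) (hb₁ : ‖b₁‖ ≤ 1)
    (hb₂ : ‖b₂‖ ≤ 1 - (‖b₁‖)^2) :
    ∃ q E : ℂ → ℂ,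
      (∀ z ∈ ball (0:ℂ) 1, HasDerivAt E (-(q z) * E z) z) ∧ E 0 = 1 ∧
      (∀ z ∈ ball (0:ℂ) 1, E z ≠ 0) ∧
      (∀ z ∈ ball (0:ℂ) 1, DifferentiableAt ℂ q z) ∧
      HasDerivAt q (2*b₁^2 + 2*b₂) 0 ∧ q 0 = 2*b₁ ∧
      (∀ z ∈ ball (0:ℂ) 1, 0 < (1 + z * q z).re) := by
  rcases eq_or_ne b₂ 0 with rfl | hb2ne
  · -- simple branch
    refine ⟨fun z => 2*b₁/(1-b₁*z), fun z => (1-b₁*z)^(2:ℕ), ?_, by norm_num, ?_, ?_, ?_, ?_, ?_⟩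
    · intro z hz
      have hz' := abs_of_mem_ball hz
      have hne := one_sub_mul_ne hb₁ hz'
      have hd : HasDerivAt (fun z : ℂ => 1 - b₁*z) (-b₁) z := by
        simpa using ((hasDerivAt_id z).const_mul b₁).const_sub 1
      have := hd.fun_pow 2
      refine this.congr_deriv ?_
      have h21 : (2:ℕ) - 1 = 1 := rfl
      rw [h21]
      field_simp
      ring
    · intro z hz
      exact pow_ne_zero _ (one_sub_mul_ne hb₁ (abs_of_mem_ball hz))
    · intro z hz
      have hne := one_sub_mul_ne hb₁ (abs_of_mem_ball hz)
      fun_prop (disch := assumption)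
    · have hne : (1:ℂ) - b₁*0 ≠ 0 := by norm_num
      have hd : HasDerivAt (fun z : ℂ => 1 - b₁*z) (-b₁) 0 := by
        simpa using ((hasDerivAt_id (0:ℂ)).const_mul b₁).const_sub 1
      have := (hasDerivAt_const (0:ℂ) (2*b₁)).fun_div hd hne
      refine this.congr_deriv ?_
      norm_num
      ring
    · norm_num
    · intro z hz
      have hz' := abs_of_mem_ball hz
      have hne := one_sub_mul_ne hb₁ hz'
      have hne' : 1 - z*b₁ ≠ 0 := by rwa [mul_comm]
      have hid : 1 + z*(2*b₁/(1-b₁*z)) = (1+b₁*z)/(1-b₁*z) := by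
        field_simp
        ring
      rw [hid]
      apply re_pos_halfplane
      rw [norm_mul]
      nlinarith [norm_nonneg b₁, norm_nonneg z]
  · -- general branch
    have hab2 : 0 < ‖b₂‖ := norm_pos_iff.mpr hb2ne
    have hb1lt : ‖b₁‖ < 1 := by nlinarith [norm_nonneg b₁]
    have h1mb : (0:ℝ) < 1 - ‖b₁‖^2 := by nlinarith [norm_nonneg b₁]
    set t : ℝ := ‖b₂‖ / (1 - ‖b₁‖^2) with ht
    have ht0 : 0 < t := div_pos hab2 h1mb
    have ht1 : t ≤ 1 := by rw [ht, div_le_one h1mb]; linarith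
    set ε : ℂ := b₂ / (‖b₂‖ : ℂ) with hε
    have habs2ne : (‖b₂‖ : ℂ) ≠ 0 := by exact_mod_cast hab2.ne'
    have heps : ‖ε‖ = 1 := by
      rw [hε, norm_div, Complex.norm_real, Real.norm_eq_abs, abs_of_pos hab2, div_self hab2.ne']
    obtain ⟨ζ₁, ζ₂, hsum, hprod, hζne, hζ1, hζ2⟩ := roots_exist hb1lt heps
    have hζsub : ζ₁ - ζ₂ ≠ 0 := sub_ne_zero.mpr hζne
    obtain ⟨a, ha⟩ : ∃ x:ℂ, x = 2*(b₁-ζ₂)/(ζ₁-ζ₂) := ⟨_, rfl⟩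
    obtain ⟨b, hbb⟩ : ∃ x:ℂ, x = 2*(ζ₁-b₁)/(ζ₁-ζ₂) := ⟨_, rfl⟩
    obtain ⟨e₀, he₀⟩ : ∃ x:ℂ, x = 2*(1-(t:ℂ)) := ⟨_, rfl⟩
    obtain ⟨e₁, he₁⟩ : ∃ x:ℂ, x = (t:ℂ)*a := ⟨_, rfl⟩
    obtain ⟨e₂, he₂⟩ : ∃ x:ℂ, x = (t:ℂ)*b := ⟨_, rfl⟩
    have ha2 : a*ζ₁ + b*ζ₂ = 2*b₁ := by
      rw [ha, hbb]; field_simp; ring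
    have hab2 : a + b = 2 := by
      rw [ha, hbb]; field_simp; ring
    have hteps : (t:ℂ)*ε*(1 - b₁*(starRingEnd ℂ) b₁) = b₂ := by
      have hcast : ((1:ℂ) - (‖b₁‖:ℂ)^2) ≠ 0 := by
        intro h
        have : ((1 - ‖b₁‖^2 : ℝ) : ℂ) = 0 := by push_cast; linear_combination h
        rw [Complex.ofReal_eq_zero] at this
        linarith
      rw [Complex.mul_conj, Complex.normSq_eq_norm_sq, hε, ht]
      push_cast
      field_simp
    refine ⟨fun z => e₀*b₁/(1-b₁*z) + e₁*ζ₁/(1-ζ₁*z) + e₂*ζ₂/(1-ζ₂*z),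
            fun z => (1-b₁*z)^e₀ * ((1-ζ₁*z)^e₁ * (1-ζ₂*z)^e₂), ?_, ?_, ?_, ?_, ?_, ?_, ?_⟩
    · intro z hz
      have hz' := abs_of_mem_ball hz
      have h0 := one_sub_mul_ne hb₁ hz'
      have h1 := one_sub_mul_ne hζ1 hz'
      have h2 := one_sub_mul_ne hζ2 hz'
      have d₀ := cpow_factor_deriv (η := b₁) (e := e₀) hb₁ hz'
      have d₁ := cpow_factor_deriv (η := ζ₁) (e := e₁) hζ1 hz'
      have d₂ := cpow_factor_deriv (η := ζ₂) (e := e₂) hζ2 hz'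
      have := d₀.fun_mul (d₁.fun_mul d₂)
      have h0' : 1 - z*b₁ ≠ 0 := by rwa [mul_comm]
      have h1' : 1 - z*ζ₁ ≠ 0 := by rwa [mul_comm]
      have h2' : 1 - z*ζ₂ ≠ 0 := by rwa [mul_comm]
      refine this.congr_deriv ?_
      field_simp [h0, h1, h2]
      ring
    · norm_num [Complex.one_cpow]
    · intro z hz
      have hz' := abs_of_mem_ball hz
      have cne : ∀ x e : ℂ, x ≠ 0 → x ^ e ≠ 0 := by
        intro x e hx
        rw [Complex.cpow_def_of_ne_zero hx]
        exact Complex.exp_ne_zero _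
      exact mul_ne_zero (cne _ _ (one_sub_mul_ne hb₁ hz'))
        (mul_ne_zero (cne _ _ (one_sub_mul_ne hζ1 hz')) (cne _ _ (one_sub_mul_ne hζ2 hz')))
    · intro z hz
      have hz' := abs_of_mem_ball hz
      have h0 := one_sub_mul_ne hb₁ hz'
      have h1 := one_sub_mul_ne hζ1 hz'
      have h2 := one_sub_mul_ne hζ2 hz'
      fun_prop (disch := assumption)
    · -- derivative of q at 0
      have hder : ∀ η c : ℂ, HasDerivAt (fun z : ℂ => c/(1-η*z))
          ((0*(1-η*0) - c*(-η))/(1-η*0)^2) 0 := by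
        intro η c
        have hne : (1:ℂ) - η*0 ≠ 0 := by norm_num
        have hd : HasDerivAt (fun z : ℂ => 1 - η*z) (-η) 0 := by
          simpa using ((hasDerivAt_id (0:ℂ)).const_mul η).const_sub 1
        exact (hasDerivAt_const (0:ℂ) c).div hd hne
      have H := ((hder b₁ (e₀*b₁)).add (hder ζ₁ (e₁*ζ₁))).add (hder ζ₂ (e₂*ζ₂))
      have hval : (0*(1-b₁*0) - e₀*b₁*(-b₁))/(1-b₁*0)^2 + (0*(1-ζ₁*0) - e₁*ζ₁*(-ζ₁))/(1-ζ₁*0)^2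
          + (0*(1-ζ₂*0) - e₂*ζ₂*(-ζ₂))/(1-ζ₂*0)^2 = 2*b₁^2 + 2*b₂ := by
        norm_num
        rw [he₀, he₁, he₂]
        linear_combination ((t:ℂ)*(ζ₁+ζ₂))*ha2 - ((t:ℂ)*ζ₁*ζ₂)*hab2 + (2*(t:ℂ)*b₁)*hsum
          - (2*(t:ℂ))*hprod + 2*hteps
      rw [hval] at H
      exact H
    · -- q 0 = 2 b₁
      norm_num
      rw [he₀, he₁, he₂]
      linear_combination (t:ℂ)*ha2
    · -- positivity of real part
      intro z hz
      have hz' := abs_of_mem_ball hz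
      have h0 := one_sub_mul_ne hb₁ hz'
      have h1 := one_sub_mul_ne hζ1 hz'
      have h2 := one_sub_mul_ne hζ2 hz'
      have hBne : (1:ℂ) + (starRingEnd ℂ) b₁*ε*z ≠ 0 := by
        rw [show (1:ℂ) + (starRingEnd ℂ) b₁*ε*z = 1 - (-((starRingEnd ℂ) b₁*ε))*z by ring]
        apply one_sub_mul_ne _ hz'
        rw [norm_neg, norm_mul, Complex.norm_conj, heps, mul_one]
        exact le_of_lt hb1lt
      have hw : ‖z*((b₁+ε*z)/(1+(starRingEnd ℂ) b₁*ε*z))‖ < 1 := by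
        rw [norm_mul, norm_div]
        have hlt := mobius_lt hb1lt heps hz'
        have hpos : 0 < ‖1+(starRingEnd ℂ) b₁*ε*z‖ := norm_pos_iff.mpr hBne
        have hd1 : ‖b₁+ε*z‖ / ‖1+(starRingEnd ℂ) b₁*ε*z‖ < 1 :=
          (div_lt_one hpos).mpr hlt
        nlinarith [norm_nonneg z, norm_nonneg (b₁+ε*z),
          div_nonneg (norm_nonneg (b₁+ε*z)) (le_of_lt hpos)]
      have hDformula : (1 - ζ₁*z)*(1 - ζ₂*z) = (1+(starRingEnd ℂ) b₁*ε*z) - z*(b₁+ε*z) := by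
        linear_combination -z*hsum + z^2*hprod
      have hDne : (1+(starRingEnd ℂ) b₁*ε*z) - z*(b₁+ε*z) ≠ 0 := by
        rw [← hDformula]; exact mul_ne_zero h1 h2
      have h1mw : 1 - z*((b₁+ε*z)/(1+(starRingEnd ℂ) b₁*ε*z)) ≠ 0 := one_sub_ne' hw
      have hbracket : z*(a*ζ₁*(1-ζ₂*z) + b*ζ₂*(1-ζ₁*z)) + (1-ζ₁*z)*(1-ζ₂*z)
          = 1 + (2*b₁-ζ₁-ζ₂)*z - ζ₁*ζ₂*z^2 := by
        linear_combination z*ha2 - z^2*ζ₁*ζ₂*hab2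
      have hnum : (1+(starRingEnd ℂ) b₁*ε*z) + z*(b₁+ε*z)
          = 1 + (2*b₁ - ζ₁ - ζ₂)*z - ζ₁*ζ₂*z^2 := by
        linear_combination z*hsum + z^2*hprod
      have step1 : (1 + z*((b₁+ε*z)/(1+(starRingEnd ℂ) b₁*ε*z)))/
            (1 - z*((b₁+ε*z)/(1+(starRingEnd ℂ) b₁*ε*z)))
          = (z*(a*ζ₁*(1-ζ₂*z) + b*ζ₂*(1-ζ₁*z)) + (1-ζ₁*z)*(1-ζ₂*z))/((1 - ζ₁*z)*(1 - ζ₂*z)) := by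
        rw [hbracket, hDformula, ← hnum, div_eq_div_iff h1mw hDne]
        have hBne' : 1 + z*ε*(starRingEnd ℂ) b₁ ≠ 0 := by convert hBne using 1; ring
        field_simp [hBne]
      have hid : 1 + z*(e₀*b₁/(1-b₁*z) + e₁*ζ₁/(1-ζ₁*z) + e₂*ζ₂/(1-ζ₂*z))
          = ((1-t : ℝ):ℂ)*((1+b₁*z)/(1-b₁*z))
            + ((t : ℝ):ℂ)*((z*(a*ζ₁*(1-ζ₂*z) + b*ζ₂*(1-ζ₁*z))
                + (1-ζ₁*z)*(1-ζ₂*z))/((1 - ζ₁*z)*(1 - ζ₂*z))) := by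
        rw [he₀, he₁, he₂]
        push_cast
        have h0' : 1 - z*b₁ ≠ 0 := by rwa [mul_comm]
        have h1' : 1 - z*ζ₁ ≠ 0 := by rwa [mul_comm]
        have h2' : 1 - z*ζ₂ ≠ 0 := by rwa [mul_comm]
        field_simp [h0, h1, h2]
        ring
      show 0 < (1 + z*(e₀*b₁/(1-b₁*z) + e₁*ζ₁/(1-ζ₁*z) + e₂*ζ₂/(1-ζ₂*z))).re
      rw [hid, ← step1, Complex.add_re, Complex.re_ofReal_mul, Complex.re_ofReal_mul]
      have r1 : 0 < ((1+b₁*z)/(1-b₁*z)).re := by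
        apply re_pos_halfplane
        rw [norm_mul]
        nlinarith [norm_nonneg b₁, norm_nonneg z]
      have r2 := re_pos_halfplane hw
      have h1t : (0:ℝ) ≤ 1 - t := by linarith
      exact add_pos_of_nonneg_of_pos (mul_nonneg h1t r1.le) (mul_pos ht0 r2)

theorem stmt_1 (p : ℝ) (hp : 0 < p ∧ p < 1) (w₀ : ℂ) (hw : w₀ ≠ 0)
    (hb : ‖(p : ℂ) + 1 / p + 1 / w₀‖ ≤ 2) (A : ℂ)
    (hA : ‖A - ((p : ℂ) + 1 / p + w₀) +
        (w₀ / 4) * ((p : ℂ) + 1 / p + 1 / w₀) ^ 2‖ ≤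
      ‖w₀‖ *
        (1 - (1 / 4) * ‖(p : ℂ) + 1 / p + 1 / w₀‖ ^ 2)) :
    ∃ f : ℂ → ℂ, SigmaStar p w₀ f ∧ a2 f = A := by
  obtain ⟨hp0, hp1⟩ := hp
  have hpc : (p:ℂ) ≠ 0 := by exact_mod_cast hp0.ne'
  have hw' : 0 < ‖w₀‖ := norm_pos_iff.mpr hw
  obtain ⟨b₁, hb₁def⟩ : ∃ x:ℂ, x = ((p:ℂ) + 1/p + 1/w₀)/2 := ⟨_, rfl⟩
  obtain ⟨b₂, hb₂def⟩ : ∃ x:ℂ,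
      x = (A - ((p:ℂ) + 1/p + w₀) + (w₀/4) * ((p:ℂ) + 1/p + 1/w₀)^2)/w₀ := ⟨_, rfl⟩
  have hc : ‖b₁‖ = ‖(p:ℂ) + 1/p + 1/w₀‖/2 := by
    rw [hb₁def, norm_div, Complex.norm_two]
  have hb₁le : ‖b₁‖ ≤ 1 := by
    rw [hc]; linarith
  have hb₂le : ‖b₂‖ ≤ 1 - (‖b₁‖)^2 := by
    rw [hb₂def, norm_div, hc, div_le_iff₀ hw']
    calc ‖A - ((p:ℂ) + 1/p + w₀) + (w₀/4) * ((p:ℂ) + 1/p + 1/w₀)^2‖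
        ≤ ‖w₀‖ * (1 - (1/4) * ‖(p:ℂ) + 1/p + 1/w₀‖^2) := hA
      _ = (1 - (‖(p:ℂ) + 1/p + 1/w₀‖/2)^2) * ‖w₀‖ := by ring
  obtain ⟨q, E, hE, hE0, hEne, hqd, hq2, hq0, hPre⟩ := construct b₁ b₂ hb₁le hb₂le
  have hq0' : q 0 = (p:ℂ) + 1/p + 1/w₀ := by rw [hq0, hb₁def]; ring
  have hm := machine p hp0 hp1 w₀ hw q E (2*b₁^2+2*b₂) hE hE0 hEne hqd hq2 hq0' hPre
  refine ⟨_, hm.1, ?_⟩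
  rw [hm.2, hq0', hb₁def]
  have hb₂' : w₀ * b₂ = A - ((p:ℂ) + 1/p + w₀) + (w₀/4)*((p:ℂ)+1/p+1/w₀)^2 := by
    rw [hb₂def, mul_comm, div_mul_cancel₀ _ hw]
  have hWv : w₀ * (1/w₀) = 1 := by field_simp
  linear_combination hb₂' + ((p:ℂ) + 1/(p:ℂ)) * hWv
end

section
/- Let p ∈ (0,1), let w₀ ∈ ℂ with w₀ ≠ 0, and let f ∈ Σ*(p,w₀) have the expansion f(z) = z + Σ_{n≥2} aₙ(f) zⁿ for |z| < p. Then |a₂(f) − 1/p| ≤ p. -/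
open Complex Metric Set

set_option maxHeartbeats 1000000 in

private lemma analyticAt_deriv' {f : ℂ → ℂ} {x : ℂ} (h : AnalyticAt ℂ f x) :
    AnalyticAt ℂ (deriv f) x := by
  obtain ⟨s, hsx, hs⟩ := h.exists_mem_nhds_analyticOnNhd
  exact hs.deriv x (mem_of_mem_nhds hsx)

private lemma dslope_deriv {ω : ℂ → ℂ} (h : AnalyticAt ℂ ω 0) (h0 : ω 0 = 0) :
    deriv (deriv ω) 0 = 2 * deriv (dslope ω 0) 0 := by
  set ψ := dslope ω 0 with hψdef
  obtain ⟨q, hq⟩ := h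
  have hψa : AnalyticAt ℂ ψ 0 := (hq.has_fpower_series_dslope_fslope).analyticAt
  have hkey : ω = fun z => z * ψ z := by
    funext z
    have h2 := sub_smul_dslope ω 0 z
    simp only [sub_zero, h0, smul_eq_mul] at h2
    rw [← h2]
  have hev : deriv ω =ᶠ[nhds (0:ℂ)] fun z => ψ z + z * deriv ψ z := by
    filter_upwards [hψa.eventually_analyticAt] with z hz
    have hd : DifferentiableAt ℂ ψ z := hz.differentiableAt
    have : HasDerivAt ω (1 * ψ z + z * deriv ψ z) z := by
      rw [hkey]
      exact (hasDerivAt_id z).mul hd.hasDerivAt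
    rw [this.deriv]; ring
  rw [hev.deriv_eq]
  have hd0 : DifferentiableAt ℂ ψ 0 := hψa.differentiableAt
  have hdd : DifferentiableAt ℂ (deriv ψ) 0 := (analyticAt_deriv' hψa).differentiableAt
  have h1 : HasDerivAt (fun z : ℂ => z * deriv ψ z) (1 * deriv ψ 0 + 0 * deriv (deriv ψ) 0) 0 :=
    (hasDerivAt_id 0).mul hdd.hasDerivAt
  rw [deriv_fun_add hd0 (h1.differentiableAt), h1.deriv]
  ring

set_option maxHeartbeats 1000000 in

/-- Schwarz–Pick inequality at the origin for maps into the closed unit disc. -/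
private lemma schwarz_pick0 {ψ : ℂ → ℂ} (hd : DifferentiableOn ℂ ψ (ball 0 1))
    (hb : ∀ z ∈ ball (0:ℂ) 1, ‖ψ z‖ ≤ 1) :
    ‖deriv ψ 0‖ ≤ 1 - (‖ψ 0‖)^2 := by
  have h0 : (0:ℂ) ∈ ball (0:ℂ) 1 := by simp
  set a := ψ 0 with ha
  by_cases hcase : ‖a‖ = 1
  · -- maximum modulus: ψ is constant
    have hmax : IsMaxOn (norm ∘ ψ) (ball (0:ℂ) 1) 0 := by
      intro z hz
      simp only [Function.comp_apply, Set.mem_setOf_eq, ← ha, hcase]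
      exact hb z hz
    have hconst := Complex.eqOn_of_isPreconnected_of_isMaxOn_norm
      (convex_ball (0:ℂ) 1).isPreconnected isOpen_ball hd h0 hmax
    have : deriv ψ 0 = 0 := by
      have hev : ψ =ᶠ[nhds (0:ℂ)] fun _ => a := by
        filter_upwards [isOpen_ball.mem_nhds h0] with z hz using hconst hz
      rw [hev.deriv_eq, deriv_const]
    rw [this, norm_zero, hcase]
    norm_num
  · have haball : ‖a‖ < 1 := lt_of_le_of_ne (hb 0 h0) hcase
    have hone : (0:ℝ) < 1 - (‖a‖)^2 := by nlinarith [norm_nonneg a]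
    -- Möbius transform
    set χ := fun z => (ψ z - a) / (1 - (starRingEnd ℂ) a * ψ z) with hχ
    have hden : ∀ z ∈ ball (0:ℂ) 1, 1 - (starRingEnd ℂ) a * ψ z ≠ 0 := by
      intro z hz h
      have h1 : ‖(starRingEnd ℂ) a * ψ z‖ < 1 := by
        rw [norm_mul, Complex.norm_conj]
        calc ‖a‖ * ‖ψ z‖ ≤ ‖a‖ * 1 :=
          mul_le_mul_of_nonneg_left (hb z hz) (norm_nonneg a)
        _ < 1 := by simpa using haball
      rw [sub_eq_zero] at h
      rw [← h] at h1
      simp at h1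
    have hχd : DifferentiableOn ℂ χ (ball 0 1) :=
      (hd.sub_const a).div ((differentiableOn_const _).sub
        ((differentiableOn_const _).mul hd)) hden
    have hχ0 : χ 0 = 0 := by simp [hχ, ← ha]
    have hχb : ∀ z ∈ ball (0:ℂ) 1, ‖χ z‖ ≤ 1 := by
      intro z hz
      have hd0 : ‖1 - (starRingEnd ℂ) a * ψ z‖ ≠ 0 :=
        norm_ne_zero_iff.mpr (hden z hz)
      rw [hχ]
      simp only
      rw [norm_div, div_le_one (lt_of_le_of_ne (norm_nonneg _) (Ne.symm hd0))]
      have hsq : Complex.normSq (ψ z - a) ≤ Complex.normSq (1 - (starRingEnd ℂ) a * ψ z) := by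
        have h1 : Complex.normSq (ψ z) ≤ 1 := by
          have := hb z hz
          rw [← Complex.sq_norm]; nlinarith [norm_nonneg (ψ z)]
        have h2 : Complex.normSq a ≤ 1 := by
          rw [← Complex.sq_norm]; nlinarith [norm_nonneg a]
        rw [Complex.normSq_apply, Complex.normSq_apply] at *
        simp only [Complex.sub_re, Complex.sub_im, Complex.mul_re, Complex.mul_im,
          Complex.conj_re, Complex.conj_im, Complex.one_re, Complex.one_im] at *
        nlinarith [mul_nonneg (sub_nonneg.mpr h2) (sub_nonneg.mpr h1)]
      rw [Complex.norm_def, Complex.norm_def]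
      exact Real.sqrt_le_sqrt hsq
    -- Schwarz lemma for χ
    have hχderiv : ‖deriv χ 0‖ ≤ 1 := by
      by_contra hcon
      push_neg at hcon
      set R := (1 + ‖deriv χ 0‖) / 2 with hR
      have hR1 : 1 < R := by rw [hR]; linarith
      have hmaps : MapsTo χ (ball (0:ℂ) 1) (ball (χ 0) R) := by
        intro z hz
        rw [hχ0, mem_ball, dist_zero_right]
        exact lt_of_le_of_lt (hχb z hz) hR1
      have := Complex.norm_deriv_le_div_of_mapsTo_ball hχd (hmaps.mono_right ball_subset_closedBall) one_pos
      rw [div_one] at this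
      rw [hR] at this
      linarith
    -- compute deriv χ 0
    have hψ0d : HasDerivAt ψ (deriv ψ 0) 0 :=
      (hd.differentiableAt (isOpen_ball.mem_nhds h0)).hasDerivAt
    set d := deriv ψ 0 with hdd
    have hnum : HasDerivAt (fun z => ψ z - a) d 0 := hψ0d.sub_const a
    have hden' : HasDerivAt (fun z => 1 - (starRingEnd ℂ) a * ψ z)
        (0 - (starRingEnd ℂ) a * d) 0 := (hasDerivAt_const 0 (1:ℂ)).sub (hψ0d.const_mul _)
    have hχder : HasDerivAt χ ((d * (1 - (starRingEnd ℂ) a * a) -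
        (a - a) * (0 - (starRingEnd ℂ) a * d)) / (1 - (starRingEnd ℂ) a * a)^2) 0 := by
      have := hnum.fun_div hden' (by simpa [← ha] using hden 0 h0)
      simpa [← ha] using this
    have hca : (starRingEnd ℂ) a * a = (Complex.normSq a : ℂ) := by
      rw [mul_comm, Complex.mul_conj]
    have hval : deriv χ 0 = d / (1 - (Complex.normSq a : ℂ)) := by
      rw [hχder.deriv, hca]
      have hne : (1 : ℂ) - (Complex.normSq a : ℂ) ≠ 0 := by
        rw [← hca]; simpa [← ha] using hden 0 h0
      field_simp
      ring
    rw [hval] at hχderiv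
    rw [norm_div] at hχderiv
    have habs1 : ‖1 - (Complex.normSq a : ℂ)‖ = 1 - (‖a‖)^2 := by
      have : (1 : ℂ) - (Complex.normSq a : ℂ) = ((1 - (‖a‖)^2 : ℝ) : ℂ) := by
        push_cast [Complex.sq_norm]; ring
      rw [this, Complex.norm_real, Real.norm_eq_abs, abs_of_pos hone]
    rw [habs1, div_le_one hone] at hχderiv
    exact hχderiv

set_option maxHeartbeats 1000000 in
private theorem coeff_relations (p : ℝ) (hp0 : 0 < p) (hp1 : p < 1) (w₀ : ℂ) (hw : w₀ ≠ 0)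
    (f P g : ℂ → ℂ)
    (hg : DifferentiableOn ℂ g (ball (0 : ℂ) 1)) (hgp : g p ≠ 0)
    (hfg : ∀ z ∈ ball (0 : ℂ) 1, z ≠ (p : ℂ) → f z = g z / (z - p))
    (hf0 : f 0 = 0) (hf'0 : deriv f 0 = 1)
    (hfw : ∀ z ∈ ball (0 : ℂ) 1, z ≠ (p : ℂ) → f z ≠ w₀)
    (hPd : DifferentiableOn ℂ P (ball (0 : ℂ) 1)) (hP0 : P 0 = 1)
    (hPre : ∀ z ∈ ball (0 : ℂ) 1, 0 < (P z).re)
    (hPeq : ∀ z ∈ ball (0 : ℂ) 1, z ≠ (p : ℂ) →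
      P z = -z * deriv f z / (f z - w₀) - p / (z - p) + p * z / (1 - p * z)) :
    (deriv P 0 - 1/p - p) * w₀ = 1 ∧
    (deriv (deriv P) 0 - 2/p^2 - 2*p^2) * (-w₀) + 2 * (deriv P 0 - 1/p - p)
      = -2 * iteratedDeriv 2 f 0 := by
  have hpC : (p : ℂ) ≠ 0 := by exact_mod_cast hp0.ne'
  have hsub : ball (0:ℂ) p ⊆ ball (0:ℂ) 1 := ball_subset_ball hp1.le
  have hzp : ∀ z ∈ ball (0:ℂ) p, z ≠ (p:ℂ) := by
    intro z hz h
    rw [mem_ball, dist_zero_right, h] at hz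
    simp [Complex.norm_of_nonneg hp0.le, abs_of_pos hp0] at hz
  have hzp' : ∀ z ∈ ball (0:ℂ) p, z - (p:ℂ) ≠ 0 := fun z hz => sub_ne_zero.mpr (hzp z hz)
  have hzq : ∀ z ∈ ball (0:ℂ) p, (1:ℂ) - p * z ≠ 0 := by
    intro z hz h
    rw [mem_ball, dist_zero_right] at hz
    have : ‖(p:ℂ) * z‖ < 1 := by
      rw [norm_mul, Complex.norm_real, Real.norm_eq_abs, abs_of_pos hp0]
      nlinarith [norm_nonneg z]
    rw [sub_eq_zero] at h
    rw [← h] at this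
    simp at this
  have hball0 : (0:ℂ) ∈ ball (0:ℂ) p := by
    simp [abs_of_pos hp0, hp0]
  -- f is analytic on ball 0 p
  have hfd : DifferentiableOn ℂ f (ball 0 p) := by
    have h1 : DifferentiableOn ℂ (fun z => g z / (z - p)) (ball 0 p) :=
      (hg.mono hsub).div ((differentiableOn_id.sub_const _)) hzp'
    exact h1.congr fun z hz => hfg z (hsub hz) (hzp z hz)
  have hfa : AnalyticOnNhd ℂ f (ball 0 p) := hfd.analyticOnNhd isOpen_ball
  have hf'a : AnalyticOnNhd ℂ (deriv f) (ball 0 p) := hfa.deriv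
  have hf''a : AnalyticOnNhd ℂ (deriv (deriv f)) (ball 0 p) := hf'a.deriv
  have hPa : AnalyticOnNhd ℂ P (ball 0 1) := hPd.analyticOnNhd isOpen_ball
  -- the function Q
  set Q : ℂ → ℂ := fun z => P z + p / (z - p) - p * z / (1 - p * z) with hQdef
  have hQd : DifferentiableOn ℂ Q (ball 0 p) := by
    apply DifferentiableOn.sub
    · exact (hPd.mono hsub).add
        ((differentiableOn_const _).div (differentiableOn_id.sub_const _) hzp')
    · exact ((differentiableOn_const _).mul differentiableOn_id).div
        ((differentiableOn_const _).sub ((differentiableOn_const _).mul differentiableOn_id)) hzq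
  have hQa : AnalyticOnNhd ℂ Q (ball 0 p) := hQd.analyticOnNhd isOpen_ball
  -- the key identity
  have hkey : ∀ z ∈ ball (0:ℂ) p, Q z * (f z - w₀) = -z * deriv f z := by
    intro z hz
    have h1 := hPeq z (hsub hz) (hzp z hz)
    have h2 : f z - w₀ ≠ 0 := sub_ne_zero.mpr (hfw z (hsub hz) (hzp z hz))
    rw [hQdef]
    simp only
    rw [h1]
    field_simp
    ring
  -- value of Q at 0
  have hQ0 : Q 0 = 0 := by
    rw [hQdef]
    simp only [hP0]
    rw [zero_sub, mul_zero, zero_div, div_neg, div_self hpC]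
    ring
  -- derivative of Q on the ball
  have hQder : ∀ z ∈ ball (0:ℂ) p,
      HasDerivAt Q (deriv P z - p / (z - p)^2 - p / (1 - p * z)^2) z := by
    intro z hz
    have h1 : HasDerivAt P (deriv P z) z :=
      ((hPa z (hsub hz)).differentiableAt).hasDerivAt
    have h2 : HasDerivAt (fun w => (p:ℂ) / (w - p)) (-(p / (z - p)^2)) z := by
      have := (hasDerivAt_const z (p:ℂ)).fun_div ((hasDerivAt_id z).sub_const (p:ℂ)) (hzp' z hz)
      refine this.congr_deriv ?_
      simp [neg_div]
    have h3 : HasDerivAt (fun w => (p:ℂ) * w / (1 - p * w)) (p / (1 - p * z)^2) z := by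
      have hden : HasDerivAt (fun w => (1:ℂ) - p * w) (-(p * 1)) z := by
        simpa using (hasDerivAt_const z (1:ℂ)).fun_sub ((hasDerivAt_id z).const_mul (p:ℂ))
      have h4 : ((1:ℂ) - p * z)^2 ≠ 0 := pow_ne_zero 2 (hzq z hz)
      have := (((hasDerivAt_id z).const_mul (p:ℂ))).fun_div hden (hzq z hz)
      simp only [id_eq, mul_one] at this
      refine this.congr_deriv ?_
      rw [div_eq_div_iff h4 h4]
      ring
    have := (h1.fun_add h2).fun_sub h3
    refine this.congr_deriv ?_
    ring
  have hQ'0 : deriv Q 0 = deriv P 0 - 1/p - p := by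
    rw [(hQder 0 hball0).deriv]
    rw [zero_sub, mul_zero, sub_zero, neg_pow, one_pow]
    field_simp
  -- first differentiation of the key identity
  have hD1 : ∀ z ∈ ball (0:ℂ) p,
      deriv Q z * (f z - w₀) + Q z * deriv f z
        = -(deriv f z) - z * deriv (deriv f) z := by
    intro z hz
    have hL : HasDerivAt (fun w => Q w * (f w - w₀))
        (deriv Q z * (f z - w₀) + Q z * deriv f z) z :=
      ((hQa z hz).differentiableAt.hasDerivAt).mul
        (((hfa z hz).differentiableAt.hasDerivAt).sub_const w₀)
    have hR : HasDerivAt (fun w => -w * deriv f w)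
        (-1 * deriv f z + -z * deriv (deriv f) z) z :=
      ((hasDerivAt_id z).neg).mul ((hf'a z hz).differentiableAt.hasDerivAt)
    have hEq : (fun w => Q w * (f w - w₀)) =ᶠ[nhds z] fun w => -w * deriv f w := by
      filter_upwards [isOpen_ball.mem_nhds hz] with w hw using hkey w hw
    have := hL.deriv
    rw [Filter.EventuallyEq.deriv_eq hEq] at this
    rw [← this, hR.deriv]
    ring
  -- first relation
  have hR1 : (deriv P 0 - 1/p - p) * w₀ = 1 := by
    have := hD1 0 hball0
    rw [hf0, hf'0, hQ0, hQ'0] at this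
    simp only [zero_sub, mul_one, zero_mul, add_zero, mul_zero, sub_zero] at this
    have h2 : (deriv P 0 - 1/p - p) * -w₀ = -1 := by linear_combination this
    linear_combination -h2
  -- second derivative of Q at 0
  have hQ'ev : deriv Q =ᶠ[nhds (0:ℂ)]
      fun z => deriv P z - p / (z - p)^2 - p / (1 - p * z)^2 := by
    filter_upwards [isOpen_ball.mem_nhds hball0] with z hz using (hQder z hz).deriv
  have hs1 : HasDerivAt (fun z => (p:ℂ) / (z - p)^2) (2/p^2 : ℂ) 0 := by
    have hd : HasDerivAt (fun z : ℂ => (z - p)^2) (2 * (0 - p)^1 * 1) 0 := by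
      exact (((hasDerivAt_id 0).sub_const (p:ℂ)).pow 2)
    have := (hasDerivAt_const 0 (p:ℂ)).fun_div hd (by simpa using pow_ne_zero 2 (hzp' 0 hball0))
    refine this.congr_deriv ?_
    field_simp
    ring
  have hs2 : HasDerivAt (fun z => (p:ℂ) / (1 - p * z)^2) (2*p^2 : ℂ) 0 := by
    have hden : HasDerivAt (fun w : ℂ => (1:ℂ) - p * w) (-((p:ℂ) * 1)) 0 := by
      simpa using (hasDerivAt_const 0 (1:ℂ)).fun_sub ((hasDerivAt_id 0).const_mul (p:ℂ))
    have hd : HasDerivAt (fun z : ℂ => (1 - p * z)^2) (2 * (1 - p * 0)^1 * -((p:ℂ)*1)) 0 :=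
      hden.pow 2
    have := (hasDerivAt_const 0 (p:ℂ)).fun_div hd (by simpa using pow_ne_zero 2 (hzq 0 hball0))
    refine this.congr_deriv ?_
    field_simp
    ring
  have hQ''0 : deriv (deriv Q) 0 = deriv (deriv P) 0 - 2/p^2 - 2*p^2 := by
    rw [hQ'ev.deriv_eq]
    have hP' : HasDerivAt (deriv P) (deriv (deriv P) 0) 0 :=
      (analyticAt_deriv' (hPa 0 (hsub hball0))).differentiableAt.hasDerivAt
    have := (hP'.fun_sub hs1).fun_sub hs2
    rw [this.deriv]
  -- second differentiation of the key identity
  have hG : HasDerivAt (fun z => deriv Q z * (f z - w₀) + Q z * deriv f z)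
      ((deriv (deriv Q) 0 * (f 0 - w₀) + deriv Q 0 * deriv f 0)
        + (deriv Q 0 * deriv f 0 + Q 0 * deriv (deriv f) 0)) 0 := by
    have t1 : HasDerivAt (fun z => deriv Q z * (f z - w₀))
        (deriv (deriv Q) 0 * (f 0 - w₀) + deriv Q 0 * deriv f 0) 0 :=
      ((analyticAt_deriv' (hQa 0 hball0)).differentiableAt.hasDerivAt).mul
        (((hfa 0 hball0).differentiableAt.hasDerivAt).sub_const w₀)
    have t2 : HasDerivAt (fun z => Q z * deriv f z)
        (deriv Q 0 * deriv f 0 + Q 0 * deriv (deriv f) 0) 0 :=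
      ((hQa 0 hball0).differentiableAt.hasDerivAt).mul
        ((hf'a 0 hball0).differentiableAt.hasDerivAt)
    exact t1.add t2
  have hH : HasDerivAt (fun z => -(deriv f z) - z * deriv (deriv f) z)
      (-(deriv (deriv f) 0) - (1 * deriv (deriv f) 0 + 0 * deriv (deriv (deriv f)) 0)) 0 := by
    have t3 : HasDerivAt (fun z => -(deriv f z)) (-(deriv (deriv f) 0)) 0 :=
      ((hf'a 0 hball0).differentiableAt.hasDerivAt).neg
    have t4 : HasDerivAt (fun z => z * deriv (deriv f) z)
        (1 * deriv (deriv f) 0 + 0 * deriv (deriv (deriv f)) 0) 0 :=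
      (hasDerivAt_id 0).mul ((hf''a 0 hball0).differentiableAt.hasDerivAt)
    exact t3.sub t4
  have hE2 : (deriv (deriv Q) 0 * (f 0 - w₀) + deriv Q 0 * deriv f 0)
        + (deriv Q 0 * deriv f 0 + Q 0 * deriv (deriv f) 0)
      = -(deriv (deriv f) 0) - (1 * deriv (deriv f) 0 + 0 * deriv (deriv (deriv f)) 0) := by
    have hEq : (fun z => deriv Q z * (f z - w₀) + Q z * deriv f z)
        =ᶠ[nhds (0:ℂ)] fun z => -(deriv f z) - z * deriv (deriv f) z := by
      filter_upwards [isOpen_ball.mem_nhds hball0] with z hz using hD1 z hz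
    have h1 := hG.deriv
    rw [Filter.EventuallyEq.deriv_eq hEq] at h1
    rw [← h1, hH.deriv]
  constructor
  · exact hR1
  · rw [hf0, hf'0, hQ0, hQ''0] at hE2
    rw [iteratedDeriv_succ, iteratedDeriv_one]
    rw [← hQ'0]
    linear_combination hE2

set_option maxHeartbeats 1000000 in
private theorem cara_bound (P : ℂ → ℂ)
    (hPd : DifferentiableOn ℂ P (ball (0 : ℂ) 1)) (hP0 : P 0 = 1)
    (hPre : ∀ z ∈ ball (0 : ℂ) 1, 0 < (P z).re) :
    ‖deriv (deriv P) 0 / 4 - (deriv P 0)^2 / 4‖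
      ≤ 1 - (‖deriv P 0 / 2‖)^2 := by
  have h0mem : (0:ℂ) ∈ ball (0:ℂ) 1 := by simp
  have hPden : ∀ z ∈ ball (0:ℂ) 1, P z + 1 ≠ 0 := by
    intro z hz h
    have h1 := hPre z hz
    have h2 : (P z + 1).re = 0 := by rw [h]; simp
    rw [Complex.add_re, Complex.one_re] at h2
    linarith
  set ω : ℂ → ℂ := fun z => (P z - 1) / (P z + 1) with hωdef
  have hωd : DifferentiableOn ℂ ω (ball 0 1) :=
    (hPd.sub_const 1).div (hPd.add_const 1) hPden
  have hω0 : ω 0 = 0 := by simp [hωdef, hP0]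
  have hωb : ∀ z ∈ ball (0:ℂ) 1, ‖ω z‖ < 1 := by
    intro z hz
    have h1 := hPre z hz
    have h2 : ‖P z + 1‖ ≠ 0 := norm_ne_zero_iff.mpr (hPden z hz)
    rw [hωdef]
    simp only
    rw [norm_div, div_lt_one (lt_of_le_of_ne (norm_nonneg _) (Ne.symm h2))]
    have hsq : Complex.normSq (P z - 1) < Complex.normSq (P z + 1) := by
      rw [Complex.normSq_apply, Complex.normSq_apply]
      simp only [Complex.sub_re, Complex.sub_im, Complex.add_re, Complex.add_im,
        Complex.one_re, Complex.one_im]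
      nlinarith
    rw [Complex.norm_def, Complex.norm_def]
    exact Real.sqrt_lt_sqrt (Complex.normSq_nonneg _) hsq
  -- derivative values of ω
  have hPa : AnalyticOnNhd ℂ P (ball 0 1) := hPd.analyticOnNhd isOpen_ball
  have hωder : ∀ z ∈ ball (0:ℂ) 1, HasDerivAt ω (2 * deriv P z / (P z + 1)^2) z := by
    intro z hz
    have hP' : HasDerivAt P (deriv P z) z := (hPa z hz).differentiableAt.hasDerivAt
    have := (hP'.sub_const 1).fun_div (hP'.add_const 1) (hPden z hz)
    refine this.congr_deriv ?_
    rw [div_eq_div_iff (pow_ne_zero 2 (hPden z hz)) (pow_ne_zero 2 (hPden z hz))]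
    ring
  have hω'0 : deriv ω 0 = deriv P 0 / 2 := by
    rw [(hωder 0 h0mem).deriv, hP0]
    norm_num
    ring
  have hω''0 : deriv (deriv ω) 0 = deriv (deriv P) 0 / 2 - (deriv P 0)^2 / 2 := by
    have hev : deriv ω =ᶠ[nhds (0:ℂ)] fun z => 2 * deriv P z / (P z + 1)^2 := by
      filter_upwards [isOpen_ball.mem_nhds h0mem] with z hz using (hωder z hz).deriv
    rw [hev.deriv_eq]
    have hP'0 : HasDerivAt P (deriv P 0) 0 := (hPa 0 h0mem).differentiableAt.hasDerivAt
    have hP''0 : HasDerivAt (deriv P) (deriv (deriv P) 0) 0 :=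
      (analyticAt_deriv' (hPa 0 h0mem)).differentiableAt.hasDerivAt
    have hnum : HasDerivAt (fun z => 2 * deriv P z) (2 * deriv (deriv P) 0) 0 :=
      hP''0.const_mul 2
    have hden : HasDerivAt (fun z : ℂ => (P z + 1)^2) (2 * (P 0 + 1)^1 * deriv P 0) 0 :=
      (hP'0.add_const 1).pow 2
    have hne : ((P 0 + 1) : ℂ)^2 ≠ 0 := pow_ne_zero 2 (hPden 0 h0mem)
    have := hnum.fun_div hden (hne)
    rw [this.deriv, hP0]
    norm_num
    ring
  -- the dslope function
  have hωa : AnalyticAt ℂ ω 0 := (hωd.analyticOnNhd isOpen_ball) 0 h0mem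
  set ψ : ℂ → ℂ := dslope ω 0 with hψdef
  have hψb : ∀ z ∈ ball (0:ℂ) 1, ‖ψ z‖ ≤ 1 := by
    intro z hz
    have hmaps : MapsTo ω (ball (0:ℂ) 1) (ball (ω 0) 1) := by
      intro w hw
      rw [hω0, mem_ball, dist_zero_right]
      exact hωb w hw
    have := Complex.norm_dslope_le_div_of_mapsTo_ball hωd (hmaps.mono_right ball_subset_closedBall) hz
    simpa using this
  have hψa : AnalyticAt ℂ ψ 0 := by
    obtain ⟨q, hq⟩ := hωa
    exact (hq.has_fpower_series_dslope_fslope).analyticAt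
  have hψd : DifferentiableOn ℂ ψ (ball 0 1) := by
    intro z hz
    rcases eq_or_ne z 0 with rfl | hne
    · exact hψa.differentiableAt.differentiableWithinAt
    · exact ((differentiableWithinAt_dslope_of_ne hne).mpr (hωd z hz))
  have hfinal := schwarz_pick0 hψd hψb
  have hψ0 : ψ 0 = deriv P 0 / 2 := by rw [hψdef, dslope_same, hω'0]
  have hψ'0 : deriv ψ 0 = deriv (deriv P) 0 / 4 - (deriv P 0)^2 / 4 := by
    have := dslope_deriv hωa hω0
    rw [hω''0] at this
    rw [← hψdef] at this
    linear_combination -this / 2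
  rw [hψ0, hψ'0] at hfinal
  exact hfinal

set_option maxHeartbeats 1000000 in

private lemma final_alg (p : ℝ) (hp0 : 0 < p) (w₀ c₁ C₂ a : ℂ)
    (R1 : (c₁ - 1/(p:ℂ) - p) * w₀ = 1)
    (R2 : (C₂ - 2/(p:ℂ)^2 - 2*(p:ℂ)^2) * (-w₀) + 2*(c₁ - 1/(p:ℂ) - p) = -2 * (2*a))
    (S : ‖C₂/4 - c₁^2/4‖ ≤ 1 - (‖c₁/2‖)^2) :
    ‖a - 1/(p:ℂ)‖ ≤ p := by
  have hu : (c₁ - 1/(p:ℂ) - p) ≠ 0 := left_ne_zero_of_mul_eq_one R1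
  have claim : (C₂/4 - c₁^2/4) - (c₁/2 - (p:ℂ))^2 = (c₁ - 1/(p:ℂ) - p) * (a - 1/(p:ℂ)) := by
    linear_combination (-(c₁ - 1/(p:ℂ) - p)/4) * R2 - ((C₂ - 2/(p:ℂ)^2 - 2*(p:ℂ)^2)/4) * R1
  have t1 : ‖(c₁ - 1/(p:ℂ) - p) * (a - 1/(p:ℂ))‖
      ≤ 1 - (‖c₁/2‖)^2 + (‖c₁/2 - p‖)^2 := by
    rw [← claim]
    calc ‖(C₂/4 - c₁^2/4) - (c₁/2 - (p:ℂ))^2‖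
        ≤ ‖C₂/4 - c₁^2/4‖ + ‖(c₁/2 - (p:ℂ))^2‖ := by
          exact norm_sub_le _ _
      _ ≤ 1 - (‖c₁/2‖)^2 + (‖c₁/2 - p‖)^2 := by
          rw [norm_pow]
          exact add_le_add_left S _
  have t2 : 1 - (‖c₁/2‖)^2 + (‖c₁/2 - p‖)^2
      = 1 + p^2 - 2*p*((c₁/2).re) := by
    rw [Complex.sq_norm, Complex.sq_norm, Complex.normSq_apply, Complex.normSq_apply]
    simp only [Complex.sub_re, Complex.sub_im, Complex.ofReal_re, Complex.ofReal_im]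
    ring
  have t3 : 1 + p^2 - 2*p*((c₁/2).re) ≤ p * ‖c₁ - 1/(p:ℂ) - p‖ := by
    have he : c₁ - 1/(p:ℂ) - p = c₁ - ((1/p + p : ℝ) : ℂ) := by push_cast; ring
    have hre : (c₁ - 1/(p:ℂ) - p).re = c₁.re - (1/p + p) := by
      rw [he, Complex.sub_re, Complex.ofReal_re]
    have h4 : -(c₁.re - (1/p + p)) ≤ ‖c₁ - 1/(p:ℂ) - p‖ := by
      rw [← hre]
      exact (neg_le_abs _).trans (Complex.abs_re_le_norm _)
    have h5 : (c₁/2).re = c₁.re / 2 := by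
      rw [Complex.div_re]
      simp [Complex.normSq_apply]
      ring
    have hp' : p * (1/p) = 1 := by field_simp
    rw [h5]
    nlinarith [h4, hp0]
  have habs : ‖c₁ - 1/(p:ℂ) - p‖ * ‖a - 1/(p:ℂ)‖
      ≤ ‖c₁ - 1/(p:ℂ) - p‖ * p := by
    rw [← norm_mul]
    calc ‖(c₁ - 1/(p:ℂ) - p) * (a - 1/(p:ℂ))‖
        ≤ 1 + p^2 - 2*p*((c₁/2).re) := by rw [← t2]; exact t1
      _ ≤ p * ‖c₁ - 1/(p:ℂ) - p‖ := t3
      _ = ‖c₁ - 1/(p:ℂ) - p‖ * p := mul_comm _ _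
  have hpos : 0 < ‖c₁ - 1/(p:ℂ) - p‖ :=
    norm_pos_iff.mpr hu
  exact le_of_mul_le_mul_left habs hpos

theorem stmt_2 (p : ℝ) (hp : 0 < p ∧ p < 1) (w₀ : ℂ) (hw : w₀ ≠ 0)
    (f : ℂ → ℂ) (hf : SigmaStar p w₀ f) :
    ‖a2 f - 1 / p‖ ≤ p := by
  obtain ⟨P, ⟨g, hg, hgp, hfg⟩, hf0, hf'0, hfw, hPd, hP0, hPre, hPeq⟩ := hf
  have hrel := coeff_relations p hp.1 hp.2 w₀ hw f P g hg hgp hfg hf0 hf'0 hfw hPd hP0 hPre hPeq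
  have hS := cara_bound P hPd hP0 hPre
  have hI : ((deriv (deriv P) 0 - 2/(p:ℂ)^2 - 2*(p:ℂ)^2) * (-w₀)
      + 2*(deriv P 0 - 1/(p:ℂ) - p) = -2 * (2 * a2 f)) := by
    rw [hrel.2, a2]
    ring
  exact final_alg p hp.1 w₀ (deriv P 0) (deriv (deriv P) 0) (a2 f) hrel.1 hI hS
end

section
/- Let p ∈ (0,1). For every complex number A with |A − 1/p| ≤ p there exist w₀ ∈ ℂ with w₀ ≠ 0 and a function f ∈ Σ*(p,w₀) such that a₂(f) = A. That is, for fixed p the exact set of variability of the second Taylor coefficient a₂(f), as f ranges over the union of the classes Σ*(p,w₀) over all w₀ ≠ 0, is the closed disc {A : |A − 1/p| ≤ p}. -/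
open Complex Metric Set

lemma aux_re_pos {ζ z : ℂ} (hζ : ‖ζ‖ ≤ 1) (hz : z ∈ ball (0:ℂ) 1) :
    0 < (1 - ζ*z).re := by
  rw [mem_ball_zero_iff] at hz
  have h1 : ‖ζ*z‖ < 1 := by
    rw [norm_mul]
    calc ‖ζ‖ * ‖z‖ ≤ 1 * ‖z‖ := by
          apply mul_le_mul_of_nonneg_right hζ (norm_nonneg _)
       _ < 1 := by rw [one_mul]; exact hz
  have h2 : (ζ*z).re ≤ ‖ζ*z‖ := Complex.re_le_norm _
  simp only [Complex.sub_re, Complex.one_re]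
  linarith

lemma aux_ne {ζ z : ℂ} (hζ : ‖ζ‖ ≤ 1) (hz : z ∈ ball (0:ℂ) 1) :
    1 - ζ*z ≠ 0 := by
  intro h
  have := aux_re_pos hζ hz
  rw [h] at this; simp at this

lemma aux_slit {ζ z : ℂ} (hζ : ‖ζ‖ ≤ 1) (hz : z ∈ ball (0:ℂ) 1) :
    1 - ζ*z ∈ slitPlane := Or.inl (aux_re_pos hζ hz)

lemma aux_half {w : ℂ} (hw : ‖w‖ < 1) : -(1/2 : ℝ) < (w/(1-w)).re := by
  have hne : 1 - w ≠ 0 := by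
    intro h
    have : w = 1 := by linear_combination -h
    rw [this] at hw; simp at hw
  have hns : Complex.normSq w < 1 := by
    rw [← Complex.sq_norm]; nlinarith [norm_nonneg w]
  have hpos : 0 < Complex.normSq (1-w) := Complex.normSq_pos.2 hne
  rw [Complex.normSq_apply] at hns
  simp only [Complex.div_re, Complex.sub_re, Complex.sub_im, Complex.one_re,
    Complex.one_im, Complex.normSq_apply, ← add_div] at hpos ⊢
  rw [lt_div_iff₀ hpos]
  nlinarith

lemma aux_lin (ζ : ℂ) (z : ℂ) : HasDerivAt (fun w : ℂ => 1 - ζ*w) (-ζ) z := by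
  simpa using ((hasDerivAt_id z).const_mul ζ).const_sub (1:ℂ)

lemma aux_log {ζ : ℂ} (hζ : ‖ζ‖ ≤ 1) {z : ℂ} (hz : z ∈ ball (0:ℂ) 1) :
    HasDerivAt (fun w => Complex.log (1 - ζ*w)) (-ζ/(1-ζ*z)) z :=
  (aux_lin ζ z).clog (aux_slit hζ hz)

lemma aux_term (r ζ : ℂ) (hζ : ‖ζ‖ ≤ 1) :
    HasDerivAt (fun z : ℂ => r*ζ/(1-ζ*z)) (r*ζ^2) 0 := by
  have h0 : (0:ℂ) ∈ ball (0:ℂ) 1 := by simp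
  have := (hasDerivAt_const (0:ℂ) (r*ζ)).div (aux_lin ζ 0) (aux_ne hζ h0)
  refine this.congr_deriv ?_
  simp
  ring

lemma aux_A (z k n m d d' : ℂ) (hk : k ≠ 0) (hn : n ≠ 0) (hd : d ≠ 0) :
    -z * ((k*(n*m)*d - k*n*d')/d^2) / (k*n/d) = -z*m + z*d'/d := by
  field_simp
  ring

lemma aux_B (z q : ℂ) (h1 : z - q ≠ 0) (h2 : 1 - q*z ≠ 0) :
    z*((1 - q*z) + (z - q)*(-q))/((z - q)*(1 - q*z)) - q/(z-q) + q*z/(1-q*z) = 1 := by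
  rw [div_sub_div _ _ (mul_ne_zero h1 h2) h1, div_add_div _ _ (mul_ne_zero (mul_ne_zero h1 h2) h1) h2, div_eq_one_iff_eq (mul_ne_zero (mul_ne_zero (mul_ne_zero h1 h2) h1) h2)]
  ring

lemma aux_val (q m : ℂ) (hq : q ≠ 0) (h2 : 1 - q^2 ≠ 0) :
    ((-q ^ 2 / (1 - q ^ 2) * (-(2 * q) * -(2 * q) + 1 * -(2 * q ^ 2 - 2 * (1 - q ^ 2) * m)) * -q +
              -q ^ 2 / (1 - q ^ 2) * (1 * -(2 * q)) * (1 + q ^ 2) -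
            (-q ^ 2 / (1 - q ^ 2) * -(2 * q) * (1 + q ^ 2) + -q ^ 2 / (1 - q ^ 2) * 1 * -(2 * q))) *
          (-q) ^ 2 -
        (-q ^ 2 / (1 - q ^ 2) * (1 * -(2 * q)) * -q - -q ^ 2 / (1 - q ^ 2) * 1 * (1 + q ^ 2)) *
          (((2:ℕ):ℂ) * (-q) ^ (2 - 1) * (1 + q ^ 2))) /
      ((-q) ^ 2) ^ 2 = 2 * (1 / q + q * m) := by
  norm_num
  field_simp
  ring

lemma master (p : ℝ) (hp0 : 0 < p) (hp1 : p < 1) (μ : ℂ)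
    (r₁ r₂ r₃ : ℝ) (ζ₁ ζ₂ ζ₃ : ℂ)
    (hr₁ : 0 ≤ r₁) (hr₂ : 0 ≤ r₂) (hr₃ : 0 ≤ r₃)
    (hζ₁ : ‖ζ₁‖ ≤ 1) (hζ₂ : ‖ζ₂‖ ≤ 1) (hζ₃ : ‖ζ₃‖ ≤ 1)
    (hsum : r₁ + r₂ + r₃ = 2)
    (hm1 : (r₁:ℂ)*ζ₁ + (r₂:ℂ)*ζ₂ + (r₃:ℂ)*ζ₃ = 2*(p:ℂ))
    (hm2 : (r₁:ℂ)*ζ₁^2 + (r₂:ℂ)*ζ₂^2 + (r₃:ℂ)*ζ₃^2 = 2*(p:ℂ)^2 - 2*(1-(p:ℂ)^2)*μ) :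
    ∃ w₀ : ℂ, w₀ ≠ 0 ∧ ∃ f : ℂ → ℂ, SigmaStar p w₀ f ∧ a2 f = 1/(p:ℂ) + (p:ℂ)*μ := by
  have hpC : (p:ℂ) ≠ 0 := by exact_mod_cast hp0.ne'
  have hp2R : (0:ℝ) < 1 - p^2 := by nlinarith
  have hp2 : (1:ℂ) - (p:ℂ)^2 ≠ 0 := by
    intro h
    have : ((1 - p^2 : ℝ) : ℂ) = 0 := by push_cast; linear_combination h
    exact hp2R.ne' (by exact_mod_cast this)
  have hpabs : ‖((p:ℝ):ℂ)‖ ≤ 1 := by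
    rw [Complex.norm_real, Real.norm_eq_abs, abs_of_pos hp0]; exact hp1.le
  set wo : ℂ := -(p:ℂ)/(1-(p:ℂ)^2) with hwo_def
  set K : ℂ := -(p:ℂ)^2/(1-(p:ℂ)^2) with hK_def
  have hwo : wo ≠ 0 := by
    rw [hwo_def]
    exact div_ne_zero (neg_ne_zero.2 hpC) hp2
  have hK : K ≠ 0 := by
    rw [hK_def]
    exact div_ne_zero (neg_ne_zero.2 (pow_ne_zero 2 hpC)) hp2
  set L : ℂ → ℂ := fun z => (r₁:ℂ)*Complex.log (1-ζ₁*z) + (r₂:ℂ)*Complex.log (1-ζ₂*z)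
      + (r₃:ℂ)*Complex.log (1-ζ₃*z) with hL_def
  set M : ℂ → ℂ := fun z => -((r₁:ℂ)*ζ₁/(1-ζ₁*z) + (r₂:ℂ)*ζ₂/(1-ζ₂*z) + (r₃:ℂ)*ζ₃/(1-ζ₃*z))
      with hM_def
  set N : ℂ → ℂ := fun z => Complex.exp (L z) with hN_def
  set D : ℂ → ℂ := fun z => (z - (p:ℂ))*(1 - (p:ℂ)*z) with hD_def
  set D' : ℂ → ℂ := fun z => (1 - (p:ℂ)*z) + (z - (p:ℂ))*(-(p:ℂ)) with hD'_def
  set f : ℂ → ℂ := fun z => wo + K * N z / D z with hf_def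
  set F : ℂ → ℂ := fun z => (K*(N z*M z)*D z - K*N z*D' z)/(D z)^2 with hF_def
  set P : ℂ → ℂ := fun z => 1 + (r₁:ℂ)*(ζ₁*z/(1-ζ₁*z)) + (r₂:ℂ)*(ζ₂*z/(1-ζ₂*z))
      + (r₃:ℂ)*(ζ₃*z/(1-ζ₃*z)) with hP_def
  have h01 : (0:ℂ) ∈ ball (0:ℂ) 1 := by simp
  have hNne : ∀ z, N z ≠ 0 := fun z => Complex.exp_ne_zero _
  have hDne : ∀ z ∈ ball (0:ℂ) 1, z ≠ (p:ℂ) → D z ≠ 0 := by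
    intro z hz hzp
    exact mul_ne_zero (sub_ne_zero.2 hzp) (aux_ne hpabs hz)
  -- derivative of L
  have hLd : ∀ z ∈ ball (0:ℂ) 1, HasDerivAt L (M z) z := by
    intro z hz
    have h := (((aux_log hζ₁ hz).const_mul (r₁:ℂ)).add
        ((aux_log hζ₂ hz).const_mul (r₂:ℂ))).add ((aux_log hζ₃ hz).const_mul (r₃:ℂ))
    refine h.congr_deriv ?_
    rw [hM_def]
    ring
  have hNd : ∀ z ∈ ball (0:ℂ) 1, HasDerivAt N (N z * M z) z := by
    intro z hz
    exact (hLd z hz).cexp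
  have hDd : ∀ z : ℂ, HasDerivAt D (D' z) z := by
    intro z
    have h := ((hasDerivAt_id z).sub_const (p:ℂ)).mul (aux_lin (p:ℂ) z)
    refine h.congr_deriv ?_
    simp only [hD'_def, id_eq]
    ring
  have hfd : ∀ z ∈ ball (0:ℂ) 1, z ≠ (p:ℂ) → HasDerivAt f (F z) z := by
    intro z hz hzp
    have h := (((hNd z hz).const_mul K).div (hDd z) (hDne z hz hzp)).const_add wo
    exact h
  -- values at 0
  have hN0 : N 0 = 1 := by simp [hN_def, hL_def]
  have hM0 : M 0 = -(2*(p:ℂ)) := by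
    rw [hM_def]
    simp only [mul_zero, sub_zero, div_one]
    rw [hm1]
  have hD0 : D 0 = -(p:ℂ) := by simp [hD_def]
  have hD'0 : D' 0 = 1 + (p:ℂ)^2 := by rw [hD'_def]; simp; ring
  have hf0 : f 0 = 0 := by
    rw [hf_def]
    simp only [hN0, hD0]
    rw [hwo_def, hK_def]
    field_simp
    ring
  have hF0 : F 0 = 1 := by
    rw [hF_def]
    simp only [hN0, hM0, hD0, hD'0]
    rw [hK_def]
    field_simp
    ring
  have hderiv0 : deriv f 0 = 1 := by
    have h0p : (0:ℂ) ≠ (p:ℂ) := fun h => hpC (by rw [← h])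
    rw [(hfd 0 h01 h0p).deriv, hF0]
  -- P basic facts
  have hP0 : P 0 = 1 := by rw [hP_def]; simp
  have hPdiff : DifferentiableOn ℂ P (ball (0:ℂ) 1) := by
    intro z hz
    apply DifferentiableAt.differentiableWithinAt
    have hterm : ∀ (r:ℝ) (ζ:ℂ), ‖ζ‖ ≤ 1 →
        DifferentiableAt ℂ (fun w => (r:ℂ)*(ζ*w/(1-ζ*w))) z := by
      intro r ζ hζ
      apply DifferentiableAt.const_mul
      exact DifferentiableAt.div (by fun_prop) (by fun_prop) (aux_ne hζ hz)
    rw [hP_def]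
    exact (((differentiableAt_const 1).add (hterm r₁ ζ₁ hζ₁)).add (hterm r₂ ζ₂ hζ₂)).add
      (hterm r₃ ζ₃ hζ₃)
  have hPre : ∀ z ∈ ball (0:ℂ) 1, 0 < (P z).re := by
    intro z hz
    have habs : ∀ ζ:ℂ, ‖ζ‖ ≤ 1 → ‖ζ*z‖ < 1 := by
      intro ζ hζ
      rw [mem_ball_zero_iff] at hz
      rw [norm_mul]
      calc ‖ζ‖ * ‖z‖ ≤ 1 * ‖z‖ :=
            mul_le_mul_of_nonneg_right hζ (norm_nonneg _)
        _ < 1 := by rw [one_mul]; exact hz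
    have h₁ := aux_half (habs ζ₁ hζ₁)
    have h₂ := aux_half (habs ζ₂ hζ₂)
    have h₃ := aux_half (habs ζ₃ hζ₃)
    have hre : (P z).re = 1 + r₁*(ζ₁*z/(1-ζ₁*z)).re + r₂*(ζ₂*z/(1-ζ₂*z)).re
        + r₃*(ζ₃*z/(1-ζ₃*z)).re := by
      rw [hP_def]
      simp [Complex.add_re, Complex.re_ofReal_mul]
    rw [hre]
    have hc : 0 < r₁ ∨ 0 < r₂ ∨ 0 < r₃ := by
      by_contra hcon
      push_neg at hcon
      linarith [hcon.1, hcon.2.1, hcon.2.2]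
    have e₁ : r₁*(-(1/2:ℝ)) ≤ r₁*(ζ₁*z/(1-ζ₁*z)).re := mul_le_mul_of_nonneg_left h₁.le hr₁
    have e₂ : r₂*(-(1/2:ℝ)) ≤ r₂*(ζ₂*z/(1-ζ₂*z)).re := mul_le_mul_of_nonneg_left h₂.le hr₂
    have e₃ : r₃*(-(1/2:ℝ)) ≤ r₃*(ζ₃*z/(1-ζ₃*z)).re := mul_le_mul_of_nonneg_left h₃.le hr₃
    rcases hc with hc | hc | hc
    · have := mul_lt_mul_of_pos_left h₁ hc
      nlinarith
    · have := mul_lt_mul_of_pos_left h₂ hc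
      nlinarith
    · have := mul_lt_mul_of_pos_left h₃ hc
      nlinarith
  -- the function g showing the simple pole
  have hpball : ((p:ℝ):ℂ) ∈ ball (0:ℂ) 1 := by
    rw [mem_ball_zero_iff, Complex.norm_real, Real.norm_eq_abs, abs_of_pos hp0]
    exact hp1
  have hg : ∃ g : ℂ → ℂ, DifferentiableOn ℂ g (ball (0:ℂ) 1) ∧ g p ≠ 0 ∧
      ∀ z ∈ ball (0:ℂ) 1, z ≠ (p:ℂ) → f z = g z / (z - p) := by
    refine ⟨fun z => wo*(z - (p:ℂ)) + K*N z/(1 - (p:ℂ)*z), ?_, ?_, ?_⟩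
    · intro z hz
      apply DifferentiableAt.differentiableWithinAt
      have hNdiff : DifferentiableAt ℂ N z := (hNd z hz).differentiableAt
      exact DifferentiableAt.add (by fun_prop)
        ((hNdiff.const_mul K).div (by fun_prop) (aux_ne hpabs hz))
    · simp only [sub_self, mul_zero, zero_add]
      exact div_ne_zero (mul_ne_zero hK (hNne _)) (aux_ne hpabs hpball)
    · intro z hz hzp
      rw [hf_def, hD_def]
      simp only []
      field_simp [sub_ne_zero.2 hzp, aux_ne hpabs hz]
  -- f omits wo
  have homit : ∀ z ∈ ball (0:ℂ) 1, z ≠ (p:ℂ) → f z ≠ wo := by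
    intro z hz hzp h
    rw [hf_def] at h
    simp only [] at h
    have hx : K*N z/D z = 0 := by linear_combination h
    rcases div_eq_zero_iff.1 hx with h' | h'
    · exact mul_ne_zero hK (hNne z) h'
    · exact hDne z hz hzp h'
  -- the representation identity
  have hident : ∀ z ∈ ball (0:ℂ) 1, z ≠ (p:ℂ) →
      P z = -z * deriv f z / (f z - wo) - p/(z-p) + p*z/(1-p*z) := by
    intro z hz hzp
    have hzP := aux_ne hpabs hz
    have hzmp := sub_ne_zero.2 hzp
    have hd := hDne z hz hzp
    have hn := hNne z
    rw [(hfd z hz hzp).deriv]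
    have h1 : f z - wo = K*N z/D z := by rw [hf_def]; ring
    rw [h1]
    have hA : -z * F z / (K*N z/D z) = -z*M z + z*D' z/D z := by
      rw [hF_def]
      exact aux_A z K (N z) (M z) (D z) (D' z) hK hn hd
    have hB : z*D' z/D z - (p:ℂ)/(z-(p:ℂ)) + (p:ℂ)*z/(1-(p:ℂ)*z) = 1 := by
      rw [hD_def, hD'_def]
      exact aux_B z (p:ℂ) hzmp hzP
    have hC : P z = 1 - z*M z := by
      rw [hP_def, hM_def]
      ring
    rw [hA, hC]
    set mz := M z with hmzd
    set dz := D z with hdzd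
    set d'z := D' z with hd'zd
    clear_value mz dz d'z
    linear_combination -hB
  -- second derivative computation
  have hM0d : HasDerivAt M (-((r₁:ℂ)*ζ₁^2 + (r₂:ℂ)*ζ₂^2 + (r₃:ℂ)*ζ₃^2)) 0 := by
    have h := (((aux_term (r₁:ℂ) ζ₁ hζ₁).add (aux_term (r₂:ℂ) ζ₂ hζ₂)).add
      (aux_term (r₃:ℂ) ζ₃ hζ₃)).neg
    rw [hM_def]
    exact h
  have hN0d : HasDerivAt N (-(2*(p:ℂ))) 0 := by
    have h := hNd 0 h01
    rw [hN0, hM0] at h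
    simpa using h
  have hD0d : HasDerivAt D (1+(p:ℂ)^2) 0 := by
    have h := hDd 0
    rwa [hD'0] at h
  have hD'd : HasDerivAt D' (-(2*(p:ℂ))) 0 := by
    rw [hD'_def]
    have h := (aux_lin (p:ℂ) 0).add (((hasDerivAt_id (0:ℂ)).sub_const (p:ℂ)).mul_const (-(p:ℂ)))
    refine h.congr_deriv ?_
    ring
  have hu := (((hN0d.mul hM0d).const_mul K).mul hD0d).sub ((hN0d.const_mul K).mul hD'd)
  have hvd := hD0d.pow 2
  have hD0ne : D 0 ≠ 0 := by rw [hD0]; exact neg_ne_zero.2 hpC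
  have hFd := hu.div hvd (pow_ne_zero 2 hD0ne)
  have hval : deriv F 0 = 2*(1/(p:ℂ) + (p:ℂ)*μ) := by
    rw [(show HasDerivAt F _ 0 from hFd).deriv]
    simp only [Pi.mul_apply, Pi.sub_apply, Pi.pow_apply]
    rw [hN0, hM0, hD0, hD'0, hm2, hK_def]
    exact aux_val (p:ℂ) μ hpC hp2
  have h2d : iteratedDeriv 2 f 0 = deriv (deriv f) 0 := by
    rw [iteratedDeriv_succ, iteratedDeriv_one]
  have hev : deriv f =ᶠ[nhds (0:ℂ)] F := by
    filter_upwards [ball_mem_nhds (0:ℂ) hp0] with w hw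
    have hw1 : w ∈ ball (0:ℂ) 1 := ball_subset_ball hp1.le hw
    have hwp : w ≠ (p:ℂ) := by
      intro h
      rw [mem_ball_zero_iff, h, Complex.norm_real, Real.norm_eq_abs, abs_of_pos hp0] at hw
      exact lt_irrefl _ hw
    exact (hfd w hw1 hwp).deriv
  have ha2 : a2 f = 1/(p:ℂ) + (p:ℂ)*μ := by
    unfold a2
    rw [h2d, hev.deriv_eq, hval]
    ring
  exact ⟨wo, hwo, f, ⟨P, hg, hf0, hderiv0, homit, hPdiff, hP0, hPre, hident⟩, ha2⟩


lemma moments (p : ℝ) (hp0 : 0 < p) (hp1 : p < 1) (μ : ℂ) (hμ : ‖μ‖ ≤ 1) :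
    ∃ (r₁ r₂ r₃ : ℝ) (ζ₁ ζ₂ ζ₃ : ℂ), 0 ≤ r₁ ∧ 0 ≤ r₂ ∧ 0 ≤ r₃ ∧
      ‖ζ₁‖ ≤ 1 ∧ ‖ζ₂‖ ≤ 1 ∧ ‖ζ₃‖ ≤ 1 ∧
      r₁ + r₂ + r₃ = 2 ∧
      (r₁:ℂ)*ζ₁ + (r₂:ℂ)*ζ₂ + (r₃:ℂ)*ζ₃ = 2*(p:ℂ) ∧
      (r₁:ℂ)*ζ₁^2 + (r₂:ℂ)*ζ₂^2 + (r₃:ℂ)*ζ₃^2 = 2*(p:ℂ)^2 - 2*(1-(p:ℂ)^2)*μ := by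
  have hpabs : ‖((p:ℝ):ℂ)‖ ≤ 1 := by
    rw [Complex.norm_real, Real.norm_eq_abs, abs_of_pos hp0]; exact hp1.le
  by_cases hμ0 : μ = 0
  · refine ⟨0, 0, 2, 0, 0, (p:ℂ), le_refl 0, le_refl 0, by norm_num, by simp, by simp,
      hpabs, by norm_num, by push_cast; ring, by rw [hμ0]; push_cast; ring⟩
  · set ρ : ℝ := ‖μ‖ with hρ_def
    have hρ0 : 0 < ρ := norm_pos_iff.2 hμ0
    have hρ1 : ρ ≤ 1 := hμ
    set κ : ℂ := (starRingEnd ℂ) μ / (ρ:ℂ) with hκ_def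
    have hκabs : ‖κ‖ = 1 := by
      rw [hκ_def, norm_div, Complex.norm_conj, Complex.norm_real, Real.norm_eq_abs, abs_of_pos hρ0, ← hρ_def,
        div_self hρ0.ne']
    obtain ⟨ξ, hξ⟩ := IsAlgClosed.exists_pow_nat_eq κ two_pos
    have habsξ : ‖ξ‖ = 1 := by
      have h2 : (‖ξ‖)^2 = 1 := by rw [← norm_pow, hξ, hκabs]
      have h3 : ‖ξ‖ = Real.sqrt ((‖ξ‖)^2) :=
        (Real.sqrt_sq (norm_nonneg _)).symm
      rw [h2, Real.sqrt_one] at h3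
      exact h3
    set x : ℝ := ξ.re with hx_def
    set y : ℝ := ξ.im with hy_def
    have hxy : x^2 + y^2 = 1 := by
      have h := Complex.sq_norm ξ
      rw [habsξ, Complex.normSq_apply] at h
      rw [hx_def, hy_def]
      nlinarith
    have hx2 : x^2 ≤ 1 := by nlinarith
    have hpx : (p*x)^2 < 1 := by nlinarith [mul_le_mul_of_nonneg_left hx2 (sq_nonneg p)]
    set s : ℝ := Real.sqrt (1 - (p*x)^2) with hs_def
    have hs0 : 0 < s := Real.sqrt_pos.2 (by nlinarith)
    have hs2 : s^2 = 1 - (p*x)^2 := Real.sq_sqrt (by nlinarith)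
    set t : ℝ := p*y/s with ht_def
    have hts : t*s = p*y := div_mul_cancel₀ _ hs0.ne'
    have hp2le : p^2*(x^2+y^2) ≤ 1 := by rw [hxy]; nlinarith
    have ht2 : t^2 ≤ 1 := by
      rw [ht_def, div_pow, div_le_one (by positivity)]
      nlinarith [hp2le, sq_nonneg (p*x), hs2]
    have htu : t ≤ 1 := by nlinarith [sq_nonneg (t-1)]
    have htl : -1 ≤ t := by nlinarith [sq_nonneg (t+1)]
    -- complex cast facts
    have hxyC : (x:ℂ)^2 + (y:ℂ)^2 = 1 := by exact_mod_cast hxy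
    have hsC : (s:ℂ)^2 = 1 - (p:ℂ)^2*(x:ℂ)^2 := by
      have hs2p : s^2 = 1 - p^2*x^2 := by rw [hs2]; ring
      exact_mod_cast hs2p
    have htsC : (t:ℂ)*(s:ℂ) = (p:ℂ)*(y:ℂ) := by exact_mod_cast hts
    have hconj : ((x:ℂ) - (y:ℂ)*I) = (starRingEnd ℂ) ξ := by
      apply Complex.ext <;> simp [hx_def, hy_def]
    have hμC : μ = (ρ:ℂ) * ((x:ℂ) - (y:ℂ)*I)^2 := by
      rw [hconj, ← map_pow, hξ, hκ_def]
      rw [map_div₀, Complex.conj_conj]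
      have : (starRingEnd ℂ) ((ρ:ℝ):ℂ) = ((ρ:ℝ):ℂ) := Complex.conj_ofReal _
      rw [this]
      have hρC : ((ρ:ℝ):ℂ) ≠ 0 := by exact_mod_cast hρ0.ne'
      field_simp
    clear_value ρ κ x y s t
    have hr1 : (0:ℝ) ≤ ρ*(1+t) := mul_nonneg hρ0.le (by linarith)
    have hr2 : (0:ℝ) ≤ ρ*(1-t) := mul_nonneg hρ0.le (by linarith)
    have hr3 : (0:ℝ) ≤ 2*(1-ρ) := by linarith
    have hrsum : ρ*(1+t) + ρ*(1-t) + 2*(1-ρ) = 2 := by ring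
    refine ⟨ρ*(1+t), ρ*(1-t), 2*(1-ρ),
      ((p:ℂ)*(x:ℂ) + (s:ℂ)*I)*((x:ℂ) - (y:ℂ)*I),
      ((p:ℂ)*(x:ℂ) - (s:ℂ)*I)*((x:ℂ) - (y:ℂ)*I),
      (p:ℂ), hr1, hr2, hr3, ?_, ?_, hpabs, hrsum, ?_, ?_⟩
    · rw [norm_mul]
      have e1 : ((p:ℂ)*(x:ℂ) + (s:ℂ)*I) = (((p*x:ℝ)):ℂ) + ((s:ℝ):ℂ)*I := by push_cast; ring
      have e2 : ((x:ℂ) - (y:ℂ)*I) = (((x:ℝ)):ℂ) + ((-y:ℝ):ℂ)*I := by push_cast; ring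
      rw [e1, e2, Complex.norm_add_mul_I, Complex.norm_add_mul_I]
      have : (p*x)^2 + s^2 = 1 := by rw [hs2]; ring
      rw [this, Real.sqrt_one, one_mul]
      have : x^2 + (-y)^2 = 1 := by rw [neg_sq]; exact hxy
      rw [this, Real.sqrt_one]
    · rw [norm_mul]
      have e1 : ((p:ℂ)*(x:ℂ) - (s:ℂ)*I) = (((p*x:ℝ)):ℂ) + ((-s:ℝ):ℂ)*I := by push_cast; ring
      have e2 : ((x:ℂ) - (y:ℂ)*I) = (((x:ℝ)):ℂ) + ((-y:ℝ):ℂ)*I := by push_cast; ring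
      rw [e1, e2, Complex.norm_add_mul_I, Complex.norm_add_mul_I]
      have h1 : (p*x)^2 + (-s)^2 = 1 := by rw [neg_sq, hs2]; ring
      rw [h1, Real.sqrt_one, one_mul]
      have : x^2 + (-y)^2 = 1 := by rw [neg_sq]; exact hxy
      rw [this, Real.sqrt_one]
    · push_cast
      linear_combination (2*(ρ:ℂ)*(p:ℂ))*hxyC + (2*(ρ:ℂ)*I*((x:ℂ)-(y:ℂ)*I))*htsC
        + (-2*(y:ℂ)^2*(p:ℂ)*(ρ:ℂ))*Complex.I_sq
    · push_cast
      linear_combination (4*(p:ℂ)*(ρ:ℂ)*(x:ℂ)*I*((x:ℂ)-(y:ℂ)*I)^2)*htsC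
        - 2*(ρ:ℂ)*((x:ℂ)-(y:ℂ)*I)^2*hsC
        + (2*(p:ℂ)^2*(ρ:ℂ)*((x:ℂ)-(y:ℂ)*I)^2 + 2*(p:ℂ)^2*(ρ:ℂ)*((x:ℂ)^2+(y:ℂ)^2+1))*hxyC
        + 2*(1-(p:ℂ)^2)*hμC
        + (2*(ρ:ℂ)*(y:ℂ)^2*(s:ℂ)^2*I^2 - 4*(ρ:ℂ)*(x:ℂ)*(y:ℂ)*(s:ℂ)^2*I
          + 4*(ρ:ℂ)*(x:ℂ)*(y:ℂ)^3*(p:ℂ)^2*I - 6*(ρ:ℂ)*(x:ℂ)^2*(y:ℂ)^2*(p:ℂ)^2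
          + 2*(ρ:ℂ)*(x:ℂ)^2*(s:ℂ)^2 - 2*(ρ:ℂ)*(y:ℂ)^4*(p:ℂ)^2)*Complex.I_sq

theorem stmt_3 (p : ℝ) (hp : 0 < p ∧ p < 1) (A : ℂ)
    (hA : ‖A - 1 / p‖ ≤ p) :
    ∃ w₀ : ℂ, w₀ ≠ 0 ∧ ∃ f : ℂ → ℂ, SigmaStar p w₀ f ∧ a2 f = A := by
  obtain ⟨hp0, hp1⟩ := hp
  have hpC : (p:ℂ) ≠ 0 := by exact_mod_cast hp0.ne'
  set μ : ℂ := (A - 1/(p:ℂ))/(p:ℂ) with hμ_def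
  have hμ : ‖μ‖ ≤ 1 := by
    rw [hμ_def, norm_div, Complex.norm_real, Real.norm_eq_abs, abs_of_pos hp0]
    rw [div_le_one hp0]
    exact hA
  obtain ⟨r₁,r₂,r₃,ζ₁,ζ₂,ζ₃,h1,h2,h3,h4,h5,h6,h7,h8,h9⟩ := moments p hp0 hp1 μ hμ
  obtain ⟨w₀,hw₀,f,hf,ha⟩ := master p hp0 hp1 μ r₁ r₂ r₃ ζ₁ ζ₂ ζ₃ h1 h2 h3 h4 h5 h6 h7 h8 h9
  refine ⟨w₀,hw₀,f,hf,?_⟩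
  rw [ha, hμ_def]
  field_simp
  ring
end

section
/- Let p ∈ (0,1), let w₀ ∈ ℂ with w₀ ≠ 0, let f ∈ Σ*(p,w₀) with associated function P holomorphic on 𝔻, and write P(z) = 1 + b₁ z + b₂ z² + ⋯. Then b₁ = p + 1/p + 1/w₀ and b₂ = p² + 1/p² + 1/w₀² + 2 a₂(f)/w₀. -/
open Complex Metric Set

theorem stmt_5 (p : ℝ) (hp : 0 < p ∧ p < 1) (w₀ : ℂ) (hw : w₀ ≠ 0)
    (f P : ℂ → ℂ) (hf : SigmaStarWith p w₀ f P) :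
    deriv P 0 = (p : ℂ) + 1 / p + 1 / w₀ ∧
    iteratedDeriv 2 P 0 / 2 =
      (p : ℂ) ^ 2 + 1 / (p : ℂ) ^ 2 + 1 / w₀ ^ 2 + 2 * a2 f / w₀ := by
  obtain ⟨hp0, hp1⟩ := hp
  obtain ⟨⟨g, hg, hgp, hfg⟩, hf0, hf1, hfw, hPd, hP0, hPre, hPQ⟩ := hf
  have hpC : (p : ℂ) ≠ 0 := by exact_mod_cast hp0.ne'
  set S : Set ℂ := ball (0 : ℂ) p with hSdef
  have hSo : IsOpen S := isOpen_ball
  have h0S : (0 : ℂ) ∈ S := by simpa [hSdef] using hp0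
  have hsub : S ⊆ ball (0 : ℂ) 1 := ball_subset_ball (by exact_mod_cast hp1.le)
  have hzp : ∀ z ∈ S, z ≠ (p : ℂ) := by
    intro z hz h
    rw [hSdef, mem_ball, dist_zero_right, h] at hz
    simp [Complex.norm_real, abs_of_pos hp0] at hz
  have hzp' : ∀ z ∈ S, z - (p : ℂ) ≠ 0 := fun z hz => sub_ne_zero.mpr (hzp z hz)
  have hfw' : ∀ z ∈ S, f z - w₀ ≠ 0 :=
    fun z hz => sub_ne_zero.mpr (hfw z (hsub hz) (hzp z hz))
  have h1pz : ∀ z ∈ S, (1 : ℂ) - p * z ≠ 0 := by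
    intro z hz h
    have h1 : (p : ℂ) * z = 1 := by linear_combination -h
    have hn : ‖z‖ < p := by simpa [hSdef, mem_ball, dist_zero_right] using hz
    have : ‖(p : ℂ) * z‖ < 1 := by
      rw [norm_mul, Complex.norm_real, Real.norm_eq_abs, abs_of_pos hp0]
      nlinarith [norm_nonneg z]
    rw [h1] at this; simp at this
  have hfd : DifferentiableOn ℂ f S := by
    have hd : DifferentiableOn ℂ (fun z => g z / (z - p)) S := by
      apply (hg.mono hsub).div
      · exact (differentiable_id.sub_const _).differentiableOn
      · exact hzp'
    exact hd.congr (fun z hz => hfg z (hsub hz) (hzp z hz))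
  have hfa : AnalyticOnNhd ℂ f S := hfd.analyticOnNhd hSo
  have hf1a : AnalyticOnNhd ℂ (deriv f) S := hfa.deriv
  have hf2a : AnalyticOnNhd ℂ (deriv (deriv f)) S := hf1a.deriv
  -- the explicit derivative of Q
  set R : ℂ → ℂ := fun z =>
    ((-deriv f z - z * deriv (deriv f) z) * (f z - w₀) + z * deriv f z * deriv f z) /
        (f z - w₀) ^ 2
      + p / (z - p) ^ 2 + p / (1 - p * z) ^ 2 with hRdef
  have hQR : ∀ z ∈ S, HasDerivAt
      (fun z => -z * deriv f z / (f z - w₀) - p / (z - p) + p * z / (1 - p * z)) (R z) z := by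
    intro z hz
    have hd1 : HasDerivAt f (deriv f z) z := (hfa z hz).differentiableAt.hasDerivAt
    have hd2 : HasDerivAt (deriv f) (deriv (deriv f) z) z :=
      (hf1a z hz).differentiableAt.hasDerivAt
    have h1 : HasDerivAt (fun z : ℂ => -z * deriv f z)
        (-1 * deriv f z + -z * deriv (deriv f) z) z := (hasDerivAt_id' z).neg.mul hd2
    have hB := h1.div (hd1.sub_const w₀) (hfw' z hz)
    have h3 : HasDerivAt (fun z : ℂ => (p : ℂ) / (z - p))
        ((0 * (z - p) - p * 1) / (z - p) ^ 2) z :=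
      (hasDerivAt_const z (p : ℂ)).div ((hasDerivAt_id' z).sub_const _) (hzp' z hz)
    have hn : HasDerivAt (fun z : ℂ => (p : ℂ) * z) ((p : ℂ) * 1) z :=
      (hasDerivAt_id' z).const_mul _
    have hden : HasDerivAt (fun z : ℂ => (1 : ℂ) - p * z) (0 - (p : ℂ) * 1) z :=
      (hasDerivAt_const z (1 : ℂ)).sub hn
    have h4 := hn.div hden (h1pz z hz)
    have htot := (hB.sub h3).add h4
    have hval : R z = ((-1 * deriv f z + -z * deriv (deriv f) z) * (f z - w₀) -
          -z * deriv f z * deriv f z) / (f z - w₀) ^ 2 -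
          (0 * (z - p) - ↑p * 1) / (z - p) ^ 2 +
          (↑p * 1 * (1 - ↑p * z) - ↑p * z * (0 - ↑p * 1)) / (1 - ↑p * z) ^ 2 := by
      rw [hRdef]
      field_simp
      ring
    rw [hval]
    exact htot
  have hPQ' : ∀ z ∈ S,
      P z = -z * deriv f z / (f z - w₀) - p / (z - p) + p * z / (1 - p * z) :=
    fun z hz => hPQ z (hsub hz) (hzp z hz)
  have hPQev : P =ᶠ[nhds 0]
      (fun z => -z * deriv f z / (f z - w₀) - p / (z - p) + p * z / (1 - p * z)) :=
    Filter.eventuallyEq_of_mem (hSo.mem_nhds h0S) hPQ'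
  have hderivP : deriv P =ᶠ[nhds 0] R := by
    refine hPQev.deriv.trans ?_
    exact Filter.eventuallyEq_of_mem (hSo.mem_nhds h0S) (fun z hz => (hQR z hz).deriv)
  have hP1 : deriv P 0 = R 0 := by
    rw [hPQev.deriv_eq]
    exact (hQR 0 h0S).deriv
  have ha2 : deriv (deriv f) 0 = 2 * a2 f := by
    rw [a2, iteratedDeriv_succ, iteratedDeriv_one]; ring
  constructor
  · rw [hP1, hRdef]
    simp only [hf0, hf1]
    field_simp
    ring
  · -- second derivative
    have hd1 : HasDerivAt f (deriv f 0) 0 := (hfa 0 h0S).differentiableAt.hasDerivAt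
    have hd2 : HasDerivAt (deriv f) (deriv (deriv f) 0) 0 :=
      (hf1a 0 h0S).differentiableAt.hasDerivAt
    have hd3 : HasDerivAt (deriv (deriv f)) (deriv (deriv (deriv f)) 0) 0 :=
      (hf2a 0 h0S).differentiableAt.hasDerivAt
    have u1 : HasDerivAt (fun z : ℂ => -deriv f z) (-(deriv (deriv f) 0)) 0 := hd2.neg
    have u2 : HasDerivAt (fun z : ℂ => z * deriv (deriv f) z)
        (1 * deriv (deriv f) 0 + 0 * deriv (deriv (deriv f)) 0) 0 :=
      (hasDerivAt_id' 0).mul hd3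
    have hN1 := (u1.sub u2).mul (hd1.sub_const w₀)
    have hN2 := ((hasDerivAt_id' 0).mul hd2).mul hd2
    have hN := hN1.add hN2
    have hD2 := (hd1.sub_const w₀).pow 2
    have hT1 := hN.div hD2 (pow_ne_zero 2 (hfw' 0 h0S))
    have hT2 := (hasDerivAt_const 0 (p : ℂ)).div
      (((hasDerivAt_id' 0).sub_const ((p : ℂ))).pow 2) (pow_ne_zero 2 (hzp' 0 h0S))
    have hT3 := (hasDerivAt_const 0 (p : ℂ)).div
      ((((hasDerivAt_id' 0).const_mul ((p : ℂ))).const_sub 1).pow 2)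
      (pow_ne_zero 2 (h1pz 0 h0S))
    have hRder := (hT1.add hT2).add hT3
    have h2 : iteratedDeriv 2 P 0 = deriv R 0 := by
      rw [iteratedDeriv_succ, iteratedDeriv_one]
      exact hderivP.deriv_eq
    rw [h2, (show HasDerivAt R _ 0 from hRder).deriv]
    simp only [Pi.mul_apply, Pi.pow_apply, Pi.add_apply, Pi.sub_apply, Pi.div_apply, Pi.neg_apply, hf0, hf1, ha2]
    field_simp
    ring
end

section
/- Let p ∈ (0,1), let w₀ ∈ ℂ with w₀ ≠ 0, let f ∈ Σ*(p,w₀) with associated function P holomorphic on 𝔻, and let ω be the Schwarz function with P = (1 + ω)/(1 − ω), with ω(z) = c₁ z + c₂ z² + ⋯. Then 1 + p² − 2 c₁ p ≠ 0 and a₂(f) = 1/p + p (c₁² − c₂ + p² − 2 c₁ p)/(1 + p² − 2 c₁ p). -/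
open Complex Metric Set Filter Topology

set_option maxHeartbeats 1000000 in
theorem stmt_7 (p : ℝ) (hp : 0 < p ∧ p < 1) (w₀ : ℂ) (hw : w₀ ≠ 0)
    (f P ω : ℂ → ℂ) (hf : SigmaStarWith p w₀ f P) (hω : SchwarzOf P ω) :
    1 + (p : ℂ) ^ 2 - 2 * deriv ω 0 * p ≠ 0 ∧
    a2 f = 1 / p + (p : ℂ) *
      ((deriv ω 0) ^ 2 - iteratedDeriv 2 ω 0 / 2 + (p : ℂ) ^ 2 - 2 * deriv ω 0 * p) /
        (1 + (p : ℂ) ^ 2 - 2 * deriv ω 0 * p) := by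
  obtain ⟨hp0, hp1⟩ := hp
  obtain ⟨⟨g, hg, hgp, hfg⟩, hf0, hf'0, hfw, hPd, hP0, _hPre, hPf⟩ := hf
  obtain ⟨hωd, hωmap, hω0, hPω⟩ := hω
  have hpC : (p:ℂ) ≠ 0 := by exact_mod_cast hp0.ne'
  have hmem : ∀ z ∈ ball (0:ℂ) p,
      z ∈ ball (0:ℂ) 1 ∧ z ≠ (p:ℂ) ∧ z - p ≠ 0 ∧ 1 - (p:ℂ)*z ≠ 0 := by
    intro z hz
    rw [mem_ball_zero_iff] at hz
    have h1 : z ∈ ball (0:ℂ) 1 := by rw [mem_ball_zero_iff]; exact hz.trans hp1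
    have h2 : z ≠ (p:ℂ) := by
      rintro rfl; simp [Complex.norm_real, abs_of_pos hp0] at hz
    refine ⟨h1, h2, sub_ne_zero.mpr h2, ?_⟩
    intro h
    have h' : (p:ℂ)*z = 1 := by linear_combination -h
    have := congrArg norm h'
    simp at this
    rw [abs_of_pos hp0] at this
    nlinarith [norm_nonneg z]
  have h0p : (0:ℂ) ∈ ball (0:ℂ) p := by simpa [mem_ball_zero_iff] using hp0
  have h01 : (0:ℂ) ∈ ball (0:ℂ) 1 := by simp [mem_ball_zero_iff]
  have hopen : IsOpen (ball (0:ℂ) p) := isOpen_ball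
  have hnhds : ball (0:ℂ) p ∈ 𝓝 (0:ℂ) := hopen.mem_nhds h0p
  have hnhds1 : ball (0:ℂ) 1 ∈ 𝓝 (0:ℂ) := isOpen_ball.mem_nhds h01
  have hga : AnalyticOnNhd ℂ g (ball (0:ℂ) 1) := hg.analyticOnNhd isOpen_ball
  have hPa : AnalyticOnNhd ℂ P (ball (0:ℂ) 1) := hPd.analyticOnNhd isOpen_ball
  have hωa : AnalyticOnNhd ℂ ω (ball (0:ℂ) 1) := hωd.analyticOnNhd isOpen_ball
  have hfa : AnalyticOnNhd ℂ f (ball (0:ℂ) p) := by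
    have hdiff : DifferentiableOn ℂ f (ball (0:ℂ) p) := by
      intro z hz
      obtain ⟨h1, h2, h3, h4⟩ := hmem z hz
      have hF : DifferentiableAt ℂ (fun w => g w / (w - (p:ℂ))) z :=
        ((hga z h1).differentiableAt).div (by fun_prop) h3
      have hev : f =ᶠ[𝓝 z] (fun w => g w / (w - (p:ℂ))) := by
        filter_upwards [hopen.mem_nhds hz] with w hw
        exact hfg w (hmem w hw).1 (hmem w hw).2.1
      exact (hF.congr_of_eventuallyEq hev).differentiableWithinAt
    exact hdiff.analyticOnNhd hopen
  have hfa1 : AnalyticOnNhd ℂ (deriv f) (ball (0:ℂ) p) := hfa.deriv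
  have hfa2 : AnalyticOnNhd ℂ (deriv (deriv f)) (ball (0:ℂ) p) := hfa1.deriv
  have hPa1 : AnalyticOnNhd ℂ (deriv P) (ball (0:ℂ) 1) := hPa.deriv
  have hωa1 : AnalyticOnNhd ℂ (deriv ω) (ball (0:ℂ) 1) := hωa.deriv
  set c1 := deriv ω 0 with hc1
  set c2 := iteratedDeriv 2 ω 0 with hc2
  have hc2' : c2 = deriv (deriv ω) 0 := by
    rw [hc2, iteratedDeriv_succ, iteratedDeriv_one]
  set r : ℂ → ℂ := fun z => (p:ℂ)/(z-p) - (p:ℂ)*z/(1-(p:ℂ)*z) with hrdef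
  set r1 : ℂ → ℂ := fun z => -(p:ℂ)/(z-p)^2 - (p:ℂ)/(1-(p:ℂ)*z)^2 with hr1def
  have hrd : ∀ z ∈ ball (0:ℂ) p, HasDerivAt r (r1 z) z := by
    intro z hz
    obtain ⟨h1, h2, h3, h4⟩ := hmem z hz
    have d1 : HasDerivAt (fun w : ℂ => (p:ℂ)/(w - p))
        ((0*(z-p) - p*1)/(z-p)^2) z :=
      (hasDerivAt_const z (p:ℂ)).div ((hasDerivAt_id z).sub_const _) h3
    have d2 : HasDerivAt (fun w : ℂ => (p:ℂ)*w/(1-(p:ℂ)*w))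
        (((p:ℂ)*(1-(p:ℂ)*z) - (p:ℂ)*z*(-(p:ℂ)))/(1-(p:ℂ)*z)^2) z := by
      refine HasDerivAt.div ?_ ?_ h4
      · simpa using (hasDerivAt_id z).const_mul (p:ℂ)
      · simpa using ((hasDerivAt_id z).const_mul (p:ℂ)).const_sub 1
    have h := d1.fun_sub d2
    refine h.congr_deriv ?_
    rw [hr1def]
    field_simp
    ring
  have hrd0 : HasDerivAt r1 (-2/(p:ℂ)^2 - 2*(p:ℂ)^2) 0 := by
    obtain ⟨h1, h2, h3, h4⟩ := hmem 0 h0p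
    have d1 : HasDerivAt (fun w : ℂ => -(p:ℂ)/(w - p)^2)
        ((0*((0:ℂ)-p)^2 - (-(p:ℂ))*(2*((0:ℂ)-p)^1*1))/(((0:ℂ)-p)^2)^2) 0 := by
      refine (hasDerivAt_const 0 (-(p:ℂ))).div ?_ (pow_ne_zero 2 h3)
      simpa using (((hasDerivAt_id (0:ℂ)).sub_const (p:ℂ)).fun_pow 2)
    have d2 : HasDerivAt (fun w : ℂ => (p:ℂ)/(1-(p:ℂ)*w)^2)
        ((0*(1-(p:ℂ)*0)^2 - (p:ℂ)*(2*(1-(p:ℂ)*0)^1*(-(p:ℂ))))/((1-(p:ℂ)*0)^2)^2) 0 := by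
      refine (hasDerivAt_const 0 ((p:ℂ))).div ?_ (pow_ne_zero 2 h4)
      have h5 : HasDerivAt (fun w : ℂ => 1-(p:ℂ)*w) (-(p:ℂ)) 0 := by
        simpa using ((hasDerivAt_id (0:ℂ)).const_mul (p:ℂ)).const_sub 1
      simpa using h5.fun_pow 2
    have h := d1.fun_sub d2
    refine h.congr_deriv ?_
    field_simp
    ring
  have hr0 : r 0 = -1 := by
    rw [hrdef]; simp; field_simp
  have hr10 : r1 0 = -1/(p:ℂ) - p := by
    rw [hr1def]; simp; field_simp
  -- derivative of P via ω
  have hone : ∀ z ∈ ball (0:ℂ) 1, 1 - ω z ≠ 0 := by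
    intro z hz
    have hb := hωmap hz
    rw [mem_ball_zero_iff] at hb
    intro h
    have h1 : ω z = 1 := by linear_combination -h
    rw [h1] at hb; simp at hb
  have hPderiv : ∀ z ∈ ball (0:ℂ) 1, deriv P z = 2 * deriv ω z / (1 - ω z)^2 := by
    intro z hz
    have hωz := hone z hz
    have hωz' : HasDerivAt ω (deriv ω z) z := (hωa z hz).differentiableAt.hasDerivAt
    have hder : HasDerivAt (fun w => (1 + ω w) / (1 - ω w))
        ((deriv ω z * (1 - ω z) - (1 + ω z) * (-(deriv ω z)))/(1 - ω z)^2) z :=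
      (hωz'.const_add 1).div (hωz'.const_sub 1) hωz
    have hev : P =ᶠ[𝓝 z] (fun w => (1 + ω w) / (1 - ω w)) := by
      filter_upwards [isOpen_ball.mem_nhds hz] with w hw using hPω w hw
    have hP' : HasDerivAt P
        ((deriv ω z * (1 - ω z) - (1 + ω z) * (-(deriv ω z)))/(1 - ω z)^2) z :=
      hder.congr_of_eventuallyEq hev
    rw [hP'.deriv]
    field_simp
    ring
  have hP'0 : deriv P 0 = 2*c1 := by
    rw [hPderiv 0 h01, hω0]; simp; rfl
  have hP''0 : deriv (deriv P) 0 = 2*c2 + 4*c1^2 := by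
    have hev : deriv P =ᶠ[𝓝 0] (fun z => 2 * deriv ω z / (1 - ω z)^2) := by
      filter_upwards [hnhds1] with z hz using hPderiv z hz
    rw [hev.deriv_eq]
    have hω'0 : HasDerivAt (deriv ω) (deriv (deriv ω) 0) 0 :=
      (hωa1 0 h01).differentiableAt.hasDerivAt
    have hω0' : HasDerivAt ω c1 0 := (hωa 0 h01).differentiableAt.hasDerivAt
    have hden : HasDerivAt (fun z => (1 - ω z)^2) (2*(1 - ω 0)^1*(-c1)) 0 :=
      (hω0'.const_sub 1).pow 2
    have hnum : HasDerivAt (fun z => 2 * deriv ω z) (2 * deriv (deriv ω) 0) 0 :=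
      hω'0.const_mul 2
    have hden0 : (1 - ω 0)^2 ≠ 0 := by rw [hω0]; norm_num
    have h := (hnum.fun_div hden hden0).deriv
    rw [h, hω0, ← hc2']
    norm_num
    ring
  -- the function E and its vanishing
  set E : ℂ → ℂ := fun z => (f z - w₀) * (P z + r z) + z * deriv f z with hEdef
  have hEzero : ∀ z ∈ ball (0:ℂ) p, E z = 0 := by
    intro z hz
    obtain ⟨h1, h2, h3, h4⟩ := hmem z hz
    have hfz := hPf z h1 h2
    have hne : f z - w₀ ≠ 0 := sub_ne_zero.mpr (hfw z h1 h2)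
    rw [hEdef]
    simp only [hrdef]
    rw [hfz]
    field_simp
    ring
  have hEev : E =ᶠ[𝓝 0] (fun _ => (0:ℂ)) := by
    filter_upwards [hnhds] with z hz using hEzero z hz
  set E1 : ℂ → ℂ := fun z => (deriv f z * (P z + r z) + (f z - w₀) * (deriv P z + r1 z))
      + (1 * deriv f z + z * deriv (deriv f) z) with hE1def
  have hE1d : ∀ z ∈ ball (0:ℂ) p, HasDerivAt E (E1 z) z := by
    intro z hz
    obtain ⟨h1, h2, h3, h4⟩ := hmem z hz
    have hfz : HasDerivAt f (deriv f z) z := (hfa z hz).differentiableAt.hasDerivAt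
    have hfz2 : HasDerivAt (deriv f) (deriv (deriv f) z) z :=
      (hfa1 z hz).differentiableAt.hasDerivAt
    have hPz : HasDerivAt P (deriv P z) z := (hPa z h1).differentiableAt.hasDerivAt
    have hrz := hrd z hz
    exact ((hfz.sub_const w₀).mul (hPz.add hrz)).add ((hasDerivAt_id z).mul hfz2)
  have hE1ev : E1 =ᶠ[𝓝 0] (fun _ => (0:ℂ)) := by
    have h1 : deriv E =ᶠ[𝓝 0] deriv (fun _ => (0:ℂ)) := hEev.deriv
    have h2 : E1 =ᶠ[𝓝 0] deriv E := by
      filter_upwards [hnhds] with z hz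
      exact ((hE1d z hz).deriv).symm
    have := h2.trans h1
    simpa [deriv_const] using this
  have hE10 : E1 0 = 0 := hE1ev.eq_of_nhds
  have hE1'0 : deriv E1 0 = 0 := by
    have := hE1ev.deriv_eq
    simpa [deriv_const] using this
  -- first coefficient relation
  have key1 : w₀ * (2*c1 - 1/(p:ℂ) - p) = 1 := by
    have h := hE10
    rw [hE1def] at h
    simp only at h
    rw [hf0, hf'0, hP0, hr0, hr10, hP'0] at h
    linear_combination -h
  -- second derivative of E1 at 0
  set f2 := deriv (deriv f) 0 with hf2def
  have hf20 : HasDerivAt (deriv f) f2 0 := (hfa1 0 h0p).differentiableAt.hasDerivAt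
  have hf30 : HasDerivAt (deriv (deriv f)) (deriv (deriv (deriv f)) 0) 0 :=
    (hfa2 0 h0p).differentiableAt.hasDerivAt
  have hf0' : HasDerivAt f 1 0 := by
    have h := (hfa 0 h0p).differentiableAt.hasDerivAt
    rwa [hf'0] at h
  have hP0' : HasDerivAt P (2*c1) 0 := by
    have h := (hPa 0 h01).differentiableAt.hasDerivAt
    rwa [hP'0] at h
  have hP20 : HasDerivAt (deriv P) (2*c2 + 4*c1^2) 0 := by
    have h := (hPa1 0 h01).differentiableAt.hasDerivAt
    rwa [hP''0] at h
  have hr00 := hrd 0 h0p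
  have T1 : HasDerivAt (fun z => deriv f z * (P z + r z))
      (f2 * (P 0 + r 0) + deriv f 0 * (2*c1 + r1 0)) 0 :=
    hf20.mul (hP0'.add hr00)
  have T2 : HasDerivAt (fun z => (f z - w₀) * (deriv P z + r1 z))
      (1 * (deriv P 0 + r1 0) + (f 0 - w₀) * ((2*c2 + 4*c1^2) + (-2/(p:ℂ)^2 - 2*(p:ℂ)^2))) 0 :=
    (hf0'.sub_const w₀).mul (hP20.add hrd0)
  have T3 : HasDerivAt (fun z => 1 * deriv f z + z * deriv (deriv f) z)
      (1 * f2 + (1 * deriv (deriv f) 0 + 0 * deriv (deriv (deriv f)) 0)) 0 :=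
    (hf20.const_mul 1).add ((hasDerivAt_id 0).mul hf30)
  have Tall : HasDerivAt E1
      ((f2 * (P 0 + r 0) + deriv f 0 * (2*c1 + r1 0))
        + (1 * (deriv P 0 + r1 0) + (f 0 - w₀) * ((2*c2 + 4*c1^2) + (-2/(p:ℂ)^2 - 2*(p:ℂ)^2)))
        + (1 * f2 + (1 * deriv (deriv f) 0 + 0 * deriv (deriv (deriv f)) 0))) 0 := by
    rw [hE1def]
    exact (T1.add T2).add T3
  have key2 : (2*c1 - 1/(p:ℂ) - p) + (2*c1 - 1/(p:ℂ) - p)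
      - w₀ * (2*c2 + 4*c1^2 - 2/(p:ℂ)^2 - 2*(p:ℂ)^2) + 2*f2 = 0 := by
    have h := Tall.deriv
    rw [hE1'0] at h
    rw [hf0, hf'0, hP0, hr0, hr10, hP'0, ← hf2def] at h
    linear_combination -h
  -- a2 f = f2 / 2
  have ha2 : a2 f = f2 / 2 := by
    rw [a2, hf2def, iteratedDeriv_succ, iteratedDeriv_one]
  -- clear denominators in key1
  have hwD : w₀ * (1 + (p:ℂ)^2 - 2*c1*p) = -p := by
    have h := key1
    field_simp at h
    linear_combination -h
  have hD : 1 + (p:ℂ)^2 - 2*c1*p ≠ 0 := by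
    intro h
    rw [h, mul_zero] at hwD
    exact hpC (by linear_combination hwD)
  refine ⟨hD, ?_⟩
  rw [ha2]
  have hw₀' : w₀ = -(p:ℂ) / (1 + (p:ℂ)^2 - 2*c1*p) := by
    rw [eq_div_iff hD]
    linear_combination hwD
  have hf2 : f2 = (w₀*(2*c2 + 4*c1^2 - 2/(p:ℂ)^2 - 2*(p:ℂ)^2) - 2*(2*c1 - 1/(p:ℂ) - p))/2 := by
    linear_combination (1/2 : ℂ) * key2
  obtain ⟨d, hd⟩ : ∃ d : ℂ, d = 1 + (p:ℂ)^2 - 2*c1*(p:ℂ) := ⟨_, rfl⟩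
  have hD' : d ≠ 0 := by rw [hd]; exact hD
  rw [hf2, hw₀', ← hd]
  field_simp
  rw [hd]
  ring
end

section
/- Let p ∈ (0,1) and let c₁, c₂ ∈ ℂ satisfy |c₁| ≤ 1 and |c₂| ≤ 1 − |c₁|². Then |c₁² − c₂ + p² − 2 c₁ p| ≤ |1 + p² − 2 c₁ p|. -/
open Complex Metric Set

theorem stmt_8 (p : ℝ) (hp : 0 < p ∧ p < 1) (c₁ c₂ : ℂ)
    (h1 : ‖c₁‖ ≤ 1) (h2 : ‖c₂‖ ≤ 1 - ‖c₁‖ ^ 2) :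
    ‖c₁ ^ 2 - c₂ + (p : ℂ) ^ 2 - 2 * c₁ * p‖ ≤
      ‖1 + (p : ℂ) ^ 2 - 2 * c₁ * p‖ := by
  have tri : ‖c₁ ^ 2 - c₂ + (p:ℂ)^2 - 2*c₁*p‖
      ≤ ‖(c₁ - p)^2‖ + ‖c₂‖ := by
    have h : c₁ ^ 2 - c₂ + (p:ℂ)^2 - 2*c₁*p = (c₁ - p)^2 + (-c₂) := by ring
    rw [h]
    have := norm_add_le ((c₁ - p)^2) (-c₂)
    rwa [norm_neg] at this
  have e1 : ‖(c₁ - p)^2‖ = ‖c₁‖ ^ 2 - 2*p*c₁.re + p^2 := by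
    rw [norm_pow, Complex.sq_norm, Complex.sq_norm, Complex.normSq_apply, Complex.normSq_apply]
    simp [Complex.sub_re, Complex.sub_im]
    ring
  have e2 : (1 + (p:ℂ)^2 - 2*c₁*p).re = 1 + p^2 - 2*p*c₁.re := by
    simp [Complex.add_re, Complex.sub_re, Complex.mul_re, ← Complex.ofReal_pow]
    ring
  have hre := Complex.re_le_norm (1 + (p:ℂ)^2 - 2*c₁*p)
  rw [e2] at hre
  calc ‖c₁ ^ 2 - c₂ + (p:ℂ)^2 - 2*c₁*p‖
      ≤ ‖(c₁ - p)^2‖ + ‖c₂‖ := tri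
    _ ≤ (‖c₁‖ ^ 2 - 2*p*c₁.re + p^2) + (1 - ‖c₁‖ ^ 2) := by
        rw [e1]; linarith
    _ = 1 + p^2 - 2*p*c₁.re := by ring
    _ ≤ ‖1 + (p:ℂ)^2 - 2*c₁*p‖ := hre
end

section
/- Let p ∈ (0,1) and let c₁, c₂ ∈ ℂ satisfy |c₁| ≤ 1, |c₂| ≤ 1 − |c₁|², and Im c₁ ≠ 0. Then the strict inequality |c₁² − c₂ + p² − 2 c₁ p| < |1 + p² − 2 c₁ p| holds; equivalently, equality |c₁² − c₂ + p² − 2 c₁ p| = |1 + p² − 2 c₁ p| can occur only when c₁ is real. -/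
open Complex Metric Set

theorem stmt_9 (p : ℝ) (hp : 0 < p ∧ p < 1) (c₁ c₂ : ℂ)
    (h1 : ‖c₁‖ ≤ 1) (h2 : ‖c₂‖ ≤ 1 - ‖c₁‖ ^ 2)
    (him : c₁.im ≠ 0) :
    ‖c₁ ^ 2 - c₂ + (p : ℂ) ^ 2 - 2 * c₁ * p‖ <
      ‖1 + (p : ℂ) ^ 2 - 2 * c₁ * p‖ := by
  obtain ⟨hp0, hp1⟩ := hp
  set w : ℂ := 1 + (p : ℂ) ^ 2 - 2 * c₁ * p with hw
  have hwim : w.im ≠ 0 := by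
    have : w.im = -(2 * c₁.im * p) := by
      simp [hw, Complex.add_im, Complex.sub_im, Complex.mul_im, Complex.ofReal_im, ← Complex.ofReal_pow]
    rw [this]
    intro h
    apply him
    have := neg_eq_zero.mp h
    nlinarith [sq_nonneg c₁.im]
  have key : ‖c₁ ^ 2 - c₂ + (p : ℂ) ^ 2 - 2 * c₁ * p‖ ≤ w.re := by
    have h3 : c₁ ^ 2 - c₂ + (p : ℂ) ^ 2 - 2 * c₁ * p = (c₁ - p) ^ 2 - c₂ := by ring
    rw [h3]
    have t1 : ‖(c₁ - p) ^ 2 - c₂‖ ≤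
        ‖(c₁ - p) ^ 2‖ + ‖c₂‖ := norm_sub_le _ _
    have t2 : ‖(c₁ - p) ^ 2‖ = ‖c₁ - p‖ ^ 2 := norm_pow _ _
    have t3 : ‖c₁ - p‖ ^ 2 + (1 - ‖c₁‖ ^ 2) = w.re := by
      rw [Complex.sq_norm, Complex.sq_norm]
      simp [hw, Complex.normSq_apply, Complex.add_re, Complex.sub_re, Complex.mul_re,
        Complex.ofReal_re, Complex.ofReal_im, ← Complex.ofReal_pow]
      ring
    linarith
  have habs : |w.re| < ‖w‖ := Complex.abs_re_lt_norm.mpr hwim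
  calc ‖c₁ ^ 2 - c₂ + (p : ℂ) ^ 2 - 2 * c₁ * p‖ ≤ w.re := key
    _ ≤ |w.re| := le_abs_self _
    _ < ‖w‖ := habs
end

section
/- Let p ∈ (0,1), let w₀ ∈ ℂ with w₀ ≠ 0, and let f ∈ Σ*(p,w₀). Then |p + 1/p + 1/w₀| ≤ 2. -/
open Complex Metric Set

open Filter Topology


lemma carath_aux (P : ℂ → ℂ) (hPd : DifferentiableOn ℂ P (ball (0:ℂ) 1))
    (hP0 : P 0 = 1) (hre : ∀ z ∈ ball (0:ℂ) 1, 0 < (P z).re) :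
    ‖deriv P 0‖ ≤ 2 := by
  set ω : ℂ → ℂ := fun z => (P z - 1) / (P z + 1) with hω
  have hne : ∀ z ∈ ball (0:ℂ) 1, P z + 1 ≠ 0 := by
    intro z hz h
    have h1 : (P z).re = -1 := by
      have h2 := congrArg Complex.re h
      simp [Complex.add_re] at h2
      linarith
    linarith [hre z hz]
  have hωd : DifferentiableOn ℂ ω (ball (0:ℂ) 1) :=
    (hPd.sub (differentiableOn_const 1)).div (hPd.add (differentiableOn_const 1)) hne
  have hmaps : MapsTo ω (ball (0:ℂ) 1) (ball (0:ℂ) 1) := by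
    intro z hz
    rw [mem_ball_zero_iff]
    have hlt : Complex.normSq (P z - 1) < Complex.normSq (P z + 1) := by
      simp only [Complex.normSq_apply, Complex.sub_re, Complex.add_re, Complex.sub_im,
        Complex.add_im, Complex.one_re, Complex.one_im]
      nlinarith [hre z hz]
    have habs : ‖P z - 1‖ < ‖P z + 1‖ := by
      rw [Complex.norm_def, Complex.norm_def]
      exact Real.sqrt_lt_sqrt (Complex.normSq_nonneg _) hlt
    show ‖(P z - 1) / (P z + 1)‖ < 1
    rw [norm_div, div_lt_one (norm_pos_iff.mpr (hne z hz))]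
    exact habs
  have hω0 : ω 0 = 0 := by simp [hω, hP0]
  have h1 : ‖deriv ω 0‖ ≤ 1 :=
    Complex.norm_deriv_le_one_of_mapsTo_ball hωd (by rw [hω0]; exact hmaps.mono_right ball_subset_closedBall) one_pos
  have hPd0 : DifferentiableAt ℂ P 0 :=
    hPd.differentiableAt (isOpen_ball.mem_nhds (by simp))
  have hd : deriv ω 0 = deriv P 0 / 2 := by
    have h0b : (0:ℂ) ∈ ball (0:ℂ) 1 := by simp
    rw [hω]
    rw [deriv_fun_div (hPd0.sub_const 1) (hPd0.add_const 1) (hne 0 h0b)]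
    rw [deriv_sub_const, deriv_add_const]
    rw [hP0]
    ring_nf
  rw [hd, norm_div, show ‖(2:ℂ)‖ = 2 by norm_num, div_le_one (by norm_num)] at h1
  linarith

lemma derivP_eq (p : ℝ) (hp0 : 0 < p) (hp1 : p < 1) (w₀ : ℂ) (hw : w₀ ≠ 0)
    (f P : ℂ → ℂ) (hcl : SigmaStarWith p w₀ f P) :
    deriv P 0 = (p : ℂ) + 1 / p + 1 / w₀ := by
  obtain ⟨⟨g, hg, hgp, hfg⟩, hf0, hf1, homit, hPd, hP0, hPre, hPeq⟩ := hcl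
  have hpC : (p : ℂ) ≠ 0 := by exact_mod_cast hp0.ne'
  have hS : ball (0:ℂ) p ⊆ ball (0:ℂ) 1 := ball_subset_ball hp1.le
  have hmem : ∀ z ∈ ball (0:ℂ) p, z ≠ (p : ℂ) := by
    intro z hz hzp
    rw [mem_ball_zero_iff, hzp] at hz
    simp [Complex.norm_real, abs_of_pos hp0] at hz
  have h0mem : (0:ℂ) ∈ ball (0:ℂ) p := by simpa using hp0
  have hSn : ball (0:ℂ) p ∈ 𝓝 (0:ℂ) := isOpen_ball.mem_nhds h0mem
  set q : ℂ → ℂ := fun z => g z / (z - ↑p) with hqdef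
  have hfq : f =ᶠ[𝓝 (0:ℂ)] q :=
    Filter.eventuallyEq_of_mem hSn (fun z hz => hfg z (hS hz) (hmem z hz))
  have hqd : DifferentiableOn ℂ q (ball (0:ℂ) p) := by
    apply DifferentiableOn.div (hg.mono hS)
      (differentiableOn_id.sub (differentiableOn_const _))
    intro z hz
    exact sub_ne_zero.mpr (hmem z hz)
  have hqa : AnalyticAt ℂ q 0 := hqd.analyticAt hSn
  have hq0 : q 0 = 0 := (hfg 0 (hS h0mem) (hmem 0 h0mem)).symm.trans hf0
  have hdq : deriv f =ᶠ[𝓝 (0:ℂ)] deriv q := hfq.deriv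
  have hdq0 : deriv q 0 = 1 := by rw [← hdq.eq_of_nhds]; exact hf1
  -- P agrees with G near 0
  have hPG : deriv P 0 = deriv (fun z =>
      -z * deriv q z / (q z - w₀) - ↑p / (z - ↑p) + ↑p * z / (1 - ↑p * z)) 0 := by
    apply Filter.EventuallyEq.deriv_eq
    filter_upwards [hfq, hdq, hSn] with z h1 h2 h3
    rw [hPeq z (hS h3) (hmem z h3), h1, h2]
  rw [hPG]
  -- differentiability facts
  have hq0d : DifferentiableAt ℂ q 0 := hqa.differentiableAt
  have hdqd : DifferentiableAt ℂ (deriv q) 0 := by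
    have h1 : DifferentiableAt ℂ (fderiv ℂ q) 0 := hqa.fderiv.differentiableAt
    have h2 : DifferentiableAt ℂ (fun z => fderiv ℂ q z 1) 0 :=
      ((ContinuousLinearMap.apply ℂ ℂ (1:ℂ)).differentiableAt).comp 0 h1
    exact h2.congr_of_eventuallyEq (Filter.Eventually.of_forall fun z => fderiv_apply_one_eq_deriv.symm)
  have hden : q 0 - w₀ ≠ 0 := by rw [hq0]; simpa using hw
  have hden2 : (0:ℂ) - ↑p ≠ 0 := sub_ne_zero.mpr hpC.symm
  have hden3 : (1:ℂ) - ↑p * 0 ≠ 0 := by simp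
  have hneg : DifferentiableAt ℂ (fun z : ℂ => -z) 0 := differentiableAt_fun_id.neg
  have hu : DifferentiableAt ℂ (fun z : ℂ => -z * deriv q z) 0 :=
    hneg.mul hdqd
  have hv : DifferentiableAt ℂ (fun z : ℂ => q z - w₀) 0 := hq0d.sub_const _
  have hT1 : DifferentiableAt ℂ (fun z : ℂ => -z * deriv q z / (q z - w₀)) 0 := hu.div hv hden
  have hT2 : DifferentiableAt ℂ (fun z : ℂ => (p:ℂ) / (z - ↑p)) 0 :=
    (differentiableAt_const _).div (differentiableAt_fun_id.sub_const _) hden2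
  have hT3 : DifferentiableAt ℂ (fun z : ℂ => (p:ℂ) * z / (1 - ↑p * z)) 0 :=
    ((differentiableAt_const _).mul differentiableAt_fun_id).div
      ((differentiableAt_const _).sub ((differentiableAt_const _).mul differentiableAt_fun_id)) hden3
  rw [deriv_fun_add (hT1.fun_sub hT2) hT3, deriv_fun_sub hT1 hT2]
  have e1 : deriv (fun z : ℂ => -z * deriv q z / (q z - w₀)) 0 = 1 / w₀ := by
    rw [deriv_fun_div hu hv hden]
    have eu : deriv (fun z : ℂ => -z * deriv q z) 0 = -1 := by
      rw [deriv_fun_mul hneg hdqd]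
      simp [hdq0]
    have ev : deriv (fun z : ℂ => q z - w₀) 0 = 1 := by
      rw [deriv_sub_const, hdq0]
    rw [eu, ev, hq0]
    simp only [neg_zero, zero_mul, mul_zero]
    field_simp
    ring
  have e2 : deriv (fun z : ℂ => (p:ℂ) / (z - ↑p)) 0 = -(1 / p) := by
    rw [deriv_fun_div (c := fun _ : ℂ => (p:ℂ)) (d := fun z : ℂ => z - ↑p) (x := 0)
      (differentiableAt_const _) (differentiableAt_fun_id.sub_const _) hden2]
    have : deriv (fun z : ℂ => z - ↑p) 0 = 1 := by
      rw [deriv_sub_const]; simp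
    rw [deriv_const, this]
    field_simp
    ring
  have e3 : deriv (fun z : ℂ => (p:ℂ) * z / (1 - ↑p * z)) 0 = p := by
    have hu3 : DifferentiableAt ℂ (fun z : ℂ => (p:ℂ) * z) 0 :=
      (differentiableAt_const _).mul differentiableAt_id
    have hv3 : DifferentiableAt ℂ (fun z : ℂ => (1:ℂ) - ↑p * z) 0 :=
      (differentiableAt_const _).sub ((differentiableAt_const _).mul differentiableAt_fun_id)
    rw [deriv_fun_div hu3 hv3 hden3]
    have du : deriv (fun z : ℂ => (p:ℂ) * z) 0 = p := by
      simpa using ((hasDerivAt_id (0:ℂ)).const_mul (p:ℂ)).deriv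
    have dv : deriv (fun z : ℂ => (1:ℂ) - ↑p * z) 0 = -p := by
      simpa using (((hasDerivAt_id (0:ℂ)).const_mul (p:ℂ)).const_sub 1).deriv
    rw [du, dv]
    simp
  rw [e1, e2, e3]
  ring


theorem stmt_11 (p : ℝ) (hp : 0 < p ∧ p < 1) (w₀ : ℂ) (hw : w₀ ≠ 0)
    (f : ℂ → ℂ) (hf : SigmaStar p w₀ f) :
    ‖(p : ℂ) + 1 / p + 1 / w₀‖ ≤ 2 := by
  obtain ⟨P, hP⟩ := hf
  have hd := derivP_eq p hp.1 hp.2 w₀ hw f P hP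
  obtain ⟨-, -, -, -, hPd, hP0, hPre, -⟩ := hP
  have h2 := carath_aux P hPd hP0 hPre
  rwa [hd] at h2
end
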